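/- arXiv:1307.0168 — 3 statements merged into one kernel-verified Lean document; each statement's English description precedes it below -/
import Mathlib

section
/- For any family of graphs H with ψ(H) = min{χ(H) : H ∈ H} - 1 = r ≥ 2, let α(n, H) be the maximum algebraic connectivity over all graphs of order n containing no copy of any member of H. Then lim_{n→∞} α(n, H)/n = 1 - 1/ψ(H). -/
open SimpleGraph Matrix BigOperators

open Finset

/-- The algebraic connectivity of a graph on a finite vertex set: the second-smallest
Laplacian eigenvalue, characterized as the infimum of Rayleigh quotients of the
Laplacian over nonzero vectors orthogonal to the all-ones vector. -/
noncomputable def algConn {V : Type*} [Fintype V] (G : SimpleGraph V) : ℝ :=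
  letI := Classical.decEq V
  letI := Classical.decRel G.Adj
  sInf { a : ℝ | ∃ x : V → ℝ, x ≠ 0 ∧ ∑ v, x v = 0 ∧
    a = (x ⬝ᵥ (G.lapMatrix ℝ).mulVec x) / (x ⬝ᵥ x) }

namespace Stmt15Aux

/-! ### Rayleigh set basics -/

def RS {n : ℕ} (G : SimpleGraph (Fin n)) [DecidableRel G.Adj] : Set ℝ :=
  { a : ℝ | ∃ x : Fin n → ℝ, x ≠ 0 ∧ ∑ v, x v = 0 ∧
    a = (x ⬝ᵥ (G.lapMatrix ℝ).mulVec x) / (x ⬝ᵥ x) }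

lemma algConn_eq {n : ℕ} (G : SimpleGraph (Fin n)) [inst : DecidableRel G.Adj] :
    algConn G = sInf (RS G) := by
  unfold algConn RS
  congr!

lemma quad_nonneg {n : ℕ} (G : SimpleGraph (Fin n)) [DecidableRel G.Adj] (x : Fin n → ℝ) :
    0 ≤ x ⬝ᵥ (G.lapMatrix ℝ).mulVec x := by
  rw [← Matrix.toLinearMap₂'_apply', lapMatrix_toLinearMap₂']
  positivity

lemma dot_self_nonneg {n : ℕ} (x : Fin n → ℝ) : 0 ≤ x ⬝ᵥ x :=
  Finset.sum_nonneg fun i _ => mul_self_nonneg _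

lemma dot_self_pos {n : ℕ} {x : Fin n → ℝ} (hx : x ≠ 0) : 0 < x ⬝ᵥ x := by
  rcases (dot_self_nonneg x).lt_or_eq with h | h
  · exact h
  · exfalso; apply hx; funext v
    have h0 : ∀ i ∈ Finset.univ, 0 ≤ x i * x i := fun i _ => mul_self_nonneg _
    have := (Finset.sum_eq_zero_iff_of_nonneg h0).1 h.symm v (Finset.mem_univ v)
    simpa [mul_self_eq_zero] using this

lemma RS_nonneg {n : ℕ} (G : SimpleGraph (Fin n)) [DecidableRel G.Adj] {a : ℝ}
    (ha : a ∈ RS G) : 0 ≤ a := by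
  obtain ⟨x, hx, -, rfl⟩ := ha
  exact div_nonneg (quad_nonneg G x) (dot_self_nonneg x)

lemma RS_bddBelow {n : ℕ} (G : SimpleGraph (Fin n)) [DecidableRel G.Adj] :
    BddBelow (RS G) := ⟨0, fun a ha => RS_nonneg G ha⟩

lemma one_sub_inv_pos {n : ℕ} (hn : 2 ≤ n) : 0 < 1 - 1/(n:ℝ) := by
  have h1 : (2:ℝ) ≤ n := by exact_mod_cast hn
  have : 1/(n:ℝ) ≤ 1/2 := by
    apply one_div_le_one_div_of_le <;> linarith
  linarith

/-- test vector `e_v - 1/n` realizes degree-based Rayleigh quotient -/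
lemma testvec_mem {n : ℕ} (hn : 2 ≤ n) (G : SimpleGraph (Fin n)) [DecidableRel G.Adj]
    (v : Fin n) : ((G.degree v : ℝ) / (1 - 1/n)) ∈ RS G := by
  have hn0 : (n:ℝ) ≠ 0 := by positivity
  have hpos := one_sub_inv_pos hn
  set e : Fin n → ℝ := fun u => if u = v then (1:ℝ) else 0 with he
  set x : Fin n → ℝ := fun u => e u - 1/n with hxdef
  have hse : ∑ u, e u = 1 := by simp [he]
  have hx0 : x ≠ 0 := by
    intro h
    have := congrFun h v
    simp [hxdef, he] at this
    rw [← one_div] at this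
    linarith
  have hsum : ∑ u, x u = 0 := by
    simp [hxdef, Finset.sum_sub_distrib, hse]
    field_simp
    ring
  set L := G.lapMatrix ℝ with hL
  have hLe : ∀ u, (L *ᵥ e) u = L u v := by
    intro u
    simp [Matrix.mulVec, dotProduct, he, mul_ite, mul_one, mul_zero]
  have hLx : L *ᵥ x = L *ᵥ e := by
    have hxe : x = e - (1/(n:ℝ)) • (fun _ : Fin n => (1:ℝ)) := by
      funext u; simp [hxdef]
    rw [hxe, Matrix.mulVec_sub, Matrix.mulVec_smul, lapMatrix_mulVec_const_eq_zero]
    simp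
  have hcol : ∑ u, L u v = 0 := by
    have hsym : ∀ u w, L u w = L w u := by
      intro u w
      have h := isSymm_lapMatrix G (R := ℝ)
      rw [Matrix.IsSymm] at h
      have := congrFun (congrFun h u) w
      simpa [Matrix.transpose_apply] using this.symm
    have : ∑ u, L u v = ∑ u, L v u := by
      apply Finset.sum_congr rfl; intro u _; exact hsym u v
    rw [this]
    have h0 := congrFun (lapMatrix_mulVec_const_eq_zero (R := ℝ) G) v
    simpa [Matrix.mulVec, dotProduct] using h0
  have hdiag : L v v = G.degree v := by
    simp [hL, lapMatrix, degMatrix, Matrix.sub_apply, Matrix.diagonal_apply_eq]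
  have hQ : x ⬝ᵥ (L *ᵥ x) = G.degree v := by
    rw [hLx]
    have : x ⬝ᵥ (L *ᵥ e) = ∑ u, (e u - 1/n) * L u v := by
      simp [dotProduct, hxdef, hLe]
    rw [this]
    have : ∀ u, (e u - 1/(n:ℝ)) * L u v = (if u = v then L u v else 0) - (1/n) * L u v := by
      intro u; by_cases h : u = v <;> simp [he, h] <;> ring
    rw [Finset.sum_congr rfl (fun u _ => this u), Finset.sum_sub_distrib]
    rw [Finset.sum_ite_eq' Finset.univ v (fun u => L u v), ← Finset.mul_sum, hcol]
    simp [hdiag]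
  have hxx : x ⬝ᵥ x = 1 - 1/n := by
    have h1 : ∀ u, x u * x u = e u - 2*(1/(n:ℝ))*(e u) + (1/n)^2 := by
      intro u; by_cases h : u = v <;> simp [hxdef, he, h] <;> ring
    have : x ⬝ᵥ x = ∑ u, (e u - 2*(1/(n:ℝ))*(e u) + (1/n)^2) := by
      simp only [dotProduct]
      exact Finset.sum_congr rfl (fun u _ => h1 u)
    rw [this, Finset.sum_add_distrib, Finset.sum_sub_distrib, ← Finset.mul_sum, hse,
      Finset.sum_const, Finset.card_univ, Fintype.card_fin]
    field_simp
    ring_nf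
    rw [← mul_pow, mul_inv_cancel₀ hn0]
    ring
  exact ⟨x, hx0, hsum, by rw [hQ, hxx]⟩

lemma algConn_le_deg {n : ℕ} (hn : 2 ≤ n) (G : SimpleGraph (Fin n)) [DecidableRel G.Adj]
    (v : Fin n) : algConn G ≤ (G.degree v : ℝ) / (1 - 1/n) := by
  rw [algConn_eq]
  exact csInf_le (RS_bddBelow G) (testvec_mem hn G v)

lemma RS_nonempty {n : ℕ} (hn : 2 ≤ n) (G : SimpleGraph (Fin n)) [DecidableRel G.Adj] :
    (RS G).Nonempty :=
  ⟨_, testvec_mem hn G ⟨0, by omega⟩⟩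

lemma algConn_nonneg {n : ℕ} (G : SimpleGraph (Fin n)) : 0 ≤ algConn G := by
  classical
  rw [algConn_eq]
  exact Real.sInf_nonneg fun a ha => RS_nonneg G ha

lemma algConn_le_card {n : ℕ} (hn : 2 ≤ n) (G : SimpleGraph (Fin n)) :
    algConn G ≤ n := by
  classical
  have v : Fin n := ⟨0, by omega⟩
  refine (algConn_le_deg hn G v).trans ?_
  have hd : (G.degree v : ℝ) ≤ (n : ℝ) - 1 := by
    have h := G.degree_lt_card_verts v
    simp only [Fintype.card_fin] at h
    have h2 : G.degree v ≤ n - 1 := by omega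
    have h3 : ((n - 1 : ℕ) : ℝ) = (n:ℝ) - 1 := by
      have : 1 ≤ n := by omega
      push_cast [this]; ring
    calc (G.degree v : ℝ) ≤ ((n-1 : ℕ) : ℝ) := by exact_mod_cast h2
      _ = (n:ℝ) - 1 := h3
  have hpos := one_sub_inv_pos hn
  rw [div_le_iff₀ hpos]
  have hn0 : (n:ℝ) ≠ 0 := by positivity
  calc (G.degree v : ℝ) ≤ (n:ℝ) - 1 := hd
    _ = n * (1 - 1/n) := by field_simp
    _ ≤ n * (1 - 1/n) := le_refl _

lemma algConn_bot {n : ℕ} (hn : 2 ≤ n) : algConn (⊥ : SimpleGraph (Fin n)) = 0 := by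
  classical
  rw [algConn_eq]
  have hsub : ∀ a ∈ RS (⊥ : SimpleGraph (Fin n)), a = 0 := by
    rintro a ⟨x, hx, hs, rfl⟩
    have hL : (⊥ : SimpleGraph (Fin n)).lapMatrix ℝ = 0 := by
      unfold lapMatrix
      ext i j
      by_cases h : i = j <;> simp [degMatrix, Matrix.diagonal_apply, h, SimpleGraph.bot_degree]
    simp [hL]
  refine le_antisymm ?_ ?_
  · obtain ⟨a, ha⟩ := RS_nonempty hn (⊥ : SimpleGraph (Fin n))
    have := hsub a ha
    subst this
    exact csInf_le (RS_bddBelow _) ha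
  · exact le_csInf (RS_nonempty hn _) fun b hb => (hsub b hb).ge

/-! ### Turán graph lower bound -/

lemma turan_class_card_le {n r : ℕ} (hr : 1 ≤ r) (k : ℕ) :
    (Finset.univ.filter (fun v : Fin n => (v : ℕ) % r = k)).card ≤ (n + r - 1) / r := by
  have hr0 : 0 < r := hr
  rw [← Finset.card_range ((n + r - 1) / r)]
  apply Finset.card_le_card_of_injOn (fun v : Fin n => (v : ℕ) / r)
  · intro v hv
    rw [Finset.mem_coe, Finset.mem_range]
    show (v : ℕ) / r < (n + r - 1) / r
    have hn1 : 1 ≤ n := by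
      have := v.2; omega
    have h1 : (v : ℕ) ≤ n - 1 := by have := v.2; omega
    have h2 : (v : ℕ) / r ≤ (n - 1) / r := Nat.div_le_div_right h1
    have h3 : (n + r - 1) / r = (n - 1) / r + 1 := by
      have : n + r - 1 = (n - 1) + r := by omega
      rw [this, Nat.add_div_right _ hr0]
    omega
  · intro v hv w hw hvw
    simp only [Finset.mem_coe, Finset.mem_filter] at hv hw
    have h1 := Nat.div_add_mod (v : ℕ) r
    have h2 := Nat.div_add_mod (w : ℕ) r
    simp only at hvw
    rw [hv.2] at h1
    rw [hw.2] at h2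
    rw [hvw] at h1
    have : (v : ℕ) = (w : ℕ) := by omega
    exact Fin.val_injective this

lemma sq_expand {n : ℕ} (P : Finset (Fin n)) (x : Fin n → ℝ) :
    ∑ i ∈ P, ∑ j ∈ P, (x i - x j)^2
      = 2*(P.card : ℝ)*(∑ i ∈ P, (x i)^2) - 2*(∑ i ∈ P, x i)^2 := by
  have hinner : ∀ i ∈ P, ∑ j ∈ P, (x i - x j)^2
      = (P.card : ℝ)*(x i)^2 + (∑ j ∈ P, (x j)^2) - 2*(x i*(∑ j ∈ P, x j)) := by
    intro i _
    have h : ∀ j ∈ P, (x i - x j)^2 = ((x i)^2 - 2*(x i * x j)) + (x j)^2 := fun j _ => by ring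
    rw [Finset.sum_congr rfl h, Finset.sum_add_distrib, Finset.sum_sub_distrib,
      Finset.sum_const, nsmul_eq_mul]
    rw [← Finset.mul_sum, ← Finset.mul_sum]
    ring
  rw [Finset.sum_congr rfl hinner, Finset.sum_sub_distrib, Finset.sum_add_distrib,
    Finset.sum_const, ← Finset.mul_sum, ← Finset.mul_sum, nsmul_eq_mul, ← Finset.sum_mul]
  ring

lemma turan_quad_lb {n r : ℕ} (hr : 1 ≤ r) (x : Fin n → ℝ) (hsum : ∑ v, x v = 0) :
    ((n : ℝ) - ((n + r - 1) / r : ℕ)) * (x ⬝ᵥ x) ≤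
      x ⬝ᵥ ((turanGraph n r).lapMatrix ℝ).mulVec x := by
  classical
  set M : ℕ := (n + r - 1) / r with hM
  set c : Fin n → ℕ := fun v => (v:ℕ) % r with hc
  set P : ℕ → Finset (Fin n) := fun k => Finset.univ.filter (fun v => c v = k) with hP
  have hxx : x ⬝ᵥ x = ∑ v, (x v)^2 := by
    simp [dotProduct, sq]
  have hQform : x ⬝ᵥ ((turanGraph n r).lapMatrix ℝ).mulVec x
      = (∑ i, ∑ j, if (turanGraph n r).Adj i j then (x i - x j)^2 else 0)/2 := by
    rw [← Matrix.toLinearMap₂'_apply', lapMatrix_toLinearMap₂']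
  have hsplit : ∀ i j : Fin n,
      (if (turanGraph n r).Adj i j then (x i - x j)^2 else 0)
        = (x i - x j)^2 - (if c i = c j then (x i - x j)^2 else 0) := by
    intro i j
    have hadj : (turanGraph n r).Adj i j ↔ ¬ (c i = c j) := Iff.rfl
    by_cases h : c i = c j <;> simp [hadj, h]
  have hA : ∑ i, ∑ j, (x i - x j)^2 = 2*(n:ℝ)*(∑ v, (x v)^2) := by
    have := sq_expand (Finset.univ : Finset (Fin n)) x
    simp only [Finset.card_univ, Fintype.card_fin] at this
    rw [this, hsum]
    ring
  -- the same-class sum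
  have hmaps : ∀ v : Fin n, v ∈ Finset.univ → c v ∈ Finset.range r :=
    fun v _ => Finset.mem_range.2 (Nat.mod_lt _ hr)
  have hSgroup : ∑ i, ∑ j, (if c i = c j then (x i - x j)^2 else 0)
      = ∑ k ∈ Finset.range r, ∑ i ∈ P k, ∑ j ∈ P k, (x i - x j)^2 := by
    rw [← Finset.sum_fiberwise_of_maps_to hmaps
      (fun i => ∑ j, (if c i = c j then (x i - x j)^2 else 0))]
    apply Finset.sum_congr rfl
    intro k _
    apply Finset.sum_congr rfl
    intro i hi
    rw [Finset.mem_filter] at hi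
    rw [← Finset.sum_filter]
    apply Finset.sum_congr
    · ext j
      simp only [hP, Finset.mem_filter, Finset.mem_univ, true_and]
      rw [hi.2]
      exact comm
    · intros; rfl
  have hclasscard : ∀ k, ((P k).card : ℝ) ≤ (M : ℝ) := by
    intro k
    exact_mod_cast turan_class_card_le (n := n) hr k
  have hSbound : ∑ k ∈ Finset.range r, ∑ i ∈ P k, ∑ j ∈ P k, (x i - x j)^2
      ≤ 2*(M:ℝ)*(∑ v, (x v)^2) := by
    have h1 : ∀ k ∈ Finset.range r, ∑ i ∈ P k, ∑ j ∈ P k, (x i - x j)^2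
        ≤ 2*(M:ℝ)*(∑ i ∈ P k, (x i)^2) := by
      intro k _
      rw [sq_expand]
      have h2 : (0:ℝ) ≤ 2*(∑ i ∈ P k, x i)^2 := by positivity
      have h3 : 2*((P k).card : ℝ)*(∑ i ∈ P k, (x i)^2) ≤ 2*(M:ℝ)*(∑ i ∈ P k, (x i)^2) := by
        apply mul_le_mul_of_nonneg_right
        · have := hclasscard k; linarith
        · positivity
      linarith
    calc ∑ k ∈ Finset.range r, ∑ i ∈ P k, ∑ j ∈ P k, (x i - x j)^2
        ≤ ∑ k ∈ Finset.range r, 2*(M:ℝ)*(∑ i ∈ P k, (x i)^2) := Finset.sum_le_sum h1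
      _ = 2*(M:ℝ)*(∑ k ∈ Finset.range r, ∑ i ∈ P k, (x i)^2) := by rw [Finset.mul_sum]
      _ = 2*(M:ℝ)*(∑ v, (x v)^2) := by
          rw [Finset.sum_fiberwise_of_maps_to hmaps (fun v => (x v)^2)]
  rw [hQform, hxx]
  have hQ2 : ∑ i, ∑ j, (if (turanGraph n r).Adj i j then (x i - x j)^2 else 0)
      = (∑ i, ∑ j, (x i - x j)^2) - (∑ i, ∑ j, (if c i = c j then (x i - x j)^2 else 0)) := by
    rw [← Finset.sum_sub_distrib]
    apply Finset.sum_congr rfl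
    intro i _
    rw [← Finset.sum_sub_distrib]
    exact Finset.sum_congr rfl fun j _ => hsplit i j
  rw [hQ2, hA, hSgroup]
  have := hSbound
  linarith

lemma turan_algConn_lb {n r : ℕ} (hn : 2 ≤ n) (hr : 1 ≤ r) :
    ((n : ℝ) - ((n + r - 1) / r : ℕ)) ≤ algConn (turanGraph n r) := by
  rw [algConn_eq]
  refine le_csInf (RS_nonempty hn _) ?_
  rintro a ⟨x, hx, hs, rfl⟩
  rw [le_div_iff₀ (dot_self_pos hx)]
  exact turan_quad_lb hr x hs

/-! ### K_M(t) copies and Erdős–Stone -/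

def KCopy {n : ℕ} (G : SimpleGraph (Fin n)) (M t : ℕ) : Prop :=
  ∃ f : Fin M → Fin t → Fin n,
    (∀ i a j b, f i a = f j b → i = j ∧ a = b) ∧
    (∀ i a j b, i ≠ j → G.Adj (f i a) (f j b))

lemma kcopy_one {n : ℕ} (G : SimpleGraph (Fin n)) {s : ℕ} (hs : s ≤ n) : KCopy G 1 s := by
  refine ⟨fun _ a => Fin.castLE hs a, ?_, ?_⟩
  · intro i a j b h
    refine ⟨Subsingleton.elim i j, ?_⟩
    exact Fin.castLE_injective hs h
  · intro i a j b hij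
    exact absurd (Subsingleton.elim i j) hij

lemma ext_lemma {n : ℕ} (G : SimpleGraph (Fin n)) (inst : DecidableRel G.Adj) (M s t : ℕ)
    (hM : 1 ≤ M) {ε β : ℝ} (hε : 0 < ε)
    (hβ : ∀ u : Fin n, (n : ℝ) - G.degree u ≤ β * n)
    (hMβ : (M : ℝ) * β ≤ 1 - ε)
    (hts : t < s)
    (hs2 : (1 - ε) * s ≤ (1 - ε/2) * ((s : ℝ) - t))
    (hbig : ((t * (s.choose t)^M : ℕ) : ℝ) ≤ ε/2 * n)
    (hcopy : KCopy G M s) : KCopy G (M+1) t := by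
  classical
  rcases Nat.eq_zero_or_pos t with rfl | ht
  · exact ⟨fun _ a => a.elim0, fun i a => a.elim0, fun i a => a.elim0⟩
  obtain ⟨f, finj, fadj⟩ := hcopy
  set U : Fin M → Finset (Fin n) := fun j => Finset.image (f j) Finset.univ with hU
  have hfinj : ∀ j, Function.Injective (f j) := fun j a b h => (finj j a j b h).2
  have hUcard : ∀ j, (U j).card = s := by
    intro j
    rw [hU]
    simp only []
    rw [Finset.card_image_of_injective _ (hfinj j), Finset.card_univ, Fintype.card_fin]
  have hUdisj : ∀ i j, i ≠ j → ∀ v, v ∈ U i → v ∉ U j := by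
    intro i j hij v hvi hvj
    simp only [hU, Finset.mem_image, Finset.mem_univ, true_and] at hvi hvj
    obtain ⟨a, ha⟩ := hvi; obtain ⟨b, hb⟩ := hvj
    exact hij (finj i a j b (ha.trans hb.symm)).1
  have hUadj : ∀ i j, i ≠ j → ∀ u ∈ U i, ∀ w ∈ U j, G.Adj u w := by
    intro i j hij u hu w hw
    simp only [hU, Finset.mem_image, Finset.mem_univ, true_and] at hu hw
    obtain ⟨a, ha⟩ := hu; obtain ⟨b, hb⟩ := hw
    rw [← ha, ← hb]; exact fadj i a j b hij
  set good : Finset (Fin n) :=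
    Finset.univ.filter (fun v => ∀ j, t ≤ ((G.neighborFinset v) ∩ U j).card) with hgood
  set bad : Finset (Fin n) := Finset.univ.filter
    (fun v : Fin n => ¬ (∀ j, t ≤ ((G.neighborFinset v) ∩ U j).card)) with hbad
  have hdegle : ∀ u : Fin n, G.degree u ≤ n := by
    intro u
    have := G.degree_lt_card_verts u
    simp only [Fintype.card_fin] at this
    omega
  have key1 : ∀ j, (∑ v : Fin n, ((U j) \ G.neighborFinset v).card)
      = ∑ u ∈ U j, (n - G.degree u) := by
    intro j
    have h1 : ∀ v : Fin n, ((U j) \ G.neighborFinset v)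
        = (U j).filter (fun u => ¬ G.Adj v u) := by
      intro v; ext u; simp [Finset.mem_sdiff, SimpleGraph.mem_neighborFinset]
    calc ∑ v : Fin n, ((U j) \ G.neighborFinset v).card
        = ∑ v : Fin n, ∑ u ∈ U j, (if G.Adj v u then 0 else 1) := by
          apply Finset.sum_congr rfl; intro v _
          rw [h1 v, Finset.card_filter]
          apply Finset.sum_congr rfl; intro u _
          by_cases h : G.Adj v u <;> simp [h]
      _ = ∑ u ∈ U j, ∑ v : Fin n, (if G.Adj v u then 0 else 1) := Finset.sum_comm
      _ = ∑ u ∈ U j, (n - G.degree u) := by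
          apply Finset.sum_congr rfl; intro u _
          have e1 : ∑ v : Fin n, (if G.Adj v u then 0 else 1)
              = (Finset.univ.filter (fun v : Fin n => ¬ G.Adj v u)).card := by
            rw [Finset.card_filter]
            apply Finset.sum_congr rfl; intro v _
            by_cases h : G.Adj v u <;> simp [h]
          have e2 : (Finset.univ.filter (fun v : Fin n => G.Adj v u)).card
              = G.degree u := by
            rw [← SimpleGraph.card_neighborFinset_eq_degree]
            congr 1
            ext v
            simp [SimpleGraph.mem_neighborFinset, SimpleGraph.adj_comm]
          have e3 := Finset.card_filter_add_card_filter_not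
            (s := (Finset.univ : Finset (Fin n))) (p := fun v => G.Adj v u)
          rw [e1]
          simp only [Finset.card_univ, Fintype.card_fin] at e3
          omega
  have key2 : (s - t) * bad.card ≤ ∑ j : Fin M, ∑ u ∈ U j, (n - G.degree u) := by
    have hv : ∀ v ∈ bad, (s - t) ≤ ∑ j : Fin M, ((U j) \ G.neighborFinset v).card := by
      intro v hv
      rw [hbad, Finset.mem_filter] at hv
      push_neg at hv
      obtain ⟨j0, hj0⟩ := hv.2
      have h1 : (U j0 ∩ G.neighborFinset v).card ≤ t := by
        have := hj0
        rw [Finset.inter_comm] at this ⊢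
        omega
      have h2 := Finset.card_inter_add_card_sdiff (U j0) (G.neighborFinset v)
      have h3 : s - t ≤ ((U j0) \ G.neighborFinset v).card := by
        rw [hUcard j0] at h2
        omega
      calc s - t ≤ ((U j0) \ G.neighborFinset v).card := h3
        _ ≤ ∑ j : Fin M, ((U j) \ G.neighborFinset v).card :=
            Finset.single_le_sum (f := fun j : Fin M => ((U j) \ G.neighborFinset v).card)
              (fun j _ => Nat.zero_le _) (Finset.mem_univ j0)
    calc (s - t) * bad.card = ∑ _v ∈ bad, (s - t) := by
          rw [Finset.sum_const, smul_eq_mul, mul_comm]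
      _ ≤ ∑ v ∈ bad, ∑ j : Fin M, ((U j) \ G.neighborFinset v).card :=
          Finset.sum_le_sum hv
      _ ≤ ∑ v : Fin n, ∑ j : Fin M, ((U j) \ G.neighborFinset v).card :=
          Finset.sum_le_sum_of_subset (Finset.filter_subset _ _)
      _ = ∑ j : Fin M, ∑ v : Fin n, ((U j) \ G.neighborFinset v).card := Finset.sum_comm
      _ = ∑ j : Fin M, ∑ u ∈ U j, (n - G.degree u) := by
          exact Finset.sum_congr rfl fun j _ => key1 j
  -- real bound on bad
  have hreal : ((s:ℝ) - t) * bad.card ≤ (1 - ε) * s * n := by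
    have hc1 : (((s - t) * bad.card : ℕ) : ℝ) = ((s:ℝ) - t) * bad.card := by
      have : t ≤ s := le_of_lt hts
      push_cast [Nat.cast_sub this]
      ring
    have hc2 : ((∑ j : Fin M, ∑ u ∈ U j, (n - G.degree u) : ℕ) : ℝ)
        = ∑ j : Fin M, ∑ u ∈ U j, ((n:ℝ) - G.degree u) := by
      push_cast [Nat.cast_sub (hdegle _)]
      rfl
    have hc3 : ∑ j : Fin M, ∑ u ∈ U j, ((n:ℝ) - G.degree u) ≤ (M : ℝ) * (s * (β * n)) := by
      calc ∑ j : Fin M, ∑ u ∈ U j, ((n:ℝ) - G.degree u)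
          ≤ ∑ j : Fin M, ∑ _u ∈ U j, (β * n) :=
            Finset.sum_le_sum fun j _ => Finset.sum_le_sum fun u _ => hβ u
        _ = ∑ j : Fin M, (s : ℝ) * (β * n) := by
            apply Finset.sum_congr rfl; intro j _
            rw [Finset.sum_const, hUcard j, nsmul_eq_mul]
        _ = (M : ℝ) * ((s:ℝ) * (β * n)) := by
            rw [Finset.sum_const, Finset.card_univ, Fintype.card_fin, nsmul_eq_mul]
    have hc4 : (M : ℝ) * ((s:ℝ) * (β * n)) ≤ (1 - ε) * s * n := by
      have h5 : (M:ℝ) * β ≤ 1 - ε := hMβ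
      have hsn : (0:ℝ) ≤ (s:ℝ) * n := by positivity
      calc (M : ℝ) * ((s:ℝ) * (β * n)) = ((M:ℝ) * β) * ((s:ℝ) * n) := by ring
        _ ≤ (1 - ε) * ((s:ℝ) * n) := mul_le_mul_of_nonneg_right h5 hsn
        _ = (1 - ε) * s * n := by ring
    calc ((s:ℝ) - t) * bad.card = (((s - t) * bad.card : ℕ) : ℝ) := hc1.symm
      _ ≤ ((∑ j : Fin M, ∑ u ∈ U j, (n - G.degree u) : ℕ) : ℝ) := by exact_mod_cast key2
      _ = ∑ j : Fin M, ∑ u ∈ U j, ((n:ℝ) - G.degree u) := hc2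
      _ ≤ (M : ℝ) * ((s:ℝ) * (β * n)) := hc3
      _ ≤ (1 - ε) * s * n := hc4
  have hst : (0:ℝ) < (s:ℝ) - t := by
    have : (t:ℝ) < s := by exact_mod_cast hts
    linarith
  have hbadbound : (bad.card : ℝ) ≤ (1 - ε/2) * n := by
    have h1 : ((s:ℝ) - t) * bad.card ≤ ((1 - ε/2) * ((s:ℝ) - t)) * n := by
      calc ((s:ℝ) - t) * bad.card ≤ (1 - ε) * s * n := hreal
        _ ≤ ((1 - ε/2) * ((s:ℝ) - t)) * n := by
            apply mul_le_mul_of_nonneg_right hs2 (Nat.cast_nonneg n)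
    have h2 : ((s:ℝ) - t) * bad.card ≤ ((s:ℝ) - t) * ((1 - ε/2) * n) := by
      calc ((s:ℝ) - t) * bad.card ≤ ((1 - ε/2) * ((s:ℝ) - t)) * n := h1
        _ = ((s:ℝ) - t) * ((1 - ε/2) * n) := by ring
    exact le_of_mul_le_mul_left h2 hst
  have hgoodbad : good.card + bad.card = n := by
    have h := Finset.card_filter_add_card_filter_not
      (s := (Finset.univ : Finset (Fin n)))
      (p := fun v => ∀ j, t ≤ ((G.neighborFinset v) ∩ U j).card)
    rw [Finset.card_univ, Fintype.card_fin] at h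
    exact h
  have hgoodlb : (t * (s.choose t)^M : ℕ) ≤ good.card := by
    have h1 : ((good.card : ℕ) : ℝ) ≥ ε/2 * n := by
      have hn' : (good.card : ℝ) + bad.card = n := by exact_mod_cast hgoodbad
      linarith
    have := hbig.trans h1
    exact_mod_cast this
  -- pigeonhole
  set B : Finset (Fin M → Finset (Fin n)) :=
    Fintype.piFinset (fun j : Fin M => (U j).powersetCard t) with hB
  have hBcard : B.card = (s.choose t)^M := by
    rw [hB, Fintype.card_piFinset]
    have : ∀ j, ((U j).powersetCard t).card = s.choose t := by
      intro j
      rw [Finset.card_powersetCard, hUcard j]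
    rw [Finset.prod_congr rfl fun j _ => this j, Finset.prod_const, Finset.card_univ,
      Fintype.card_fin]
  set g : Fin n → (Fin M → Finset (Fin n)) := fun v j =>
    if h : t ≤ ((G.neighborFinset v) ∩ U j).card
    then (Finset.exists_subset_card_eq h).choose else ∅ with hgdef
  have hg : ∀ v ∈ good, ∀ j, g v j ⊆ G.neighborFinset v ∩ U j ∧ (g v j).card = t := by
    intro v hvg j
    rw [hgood, Finset.mem_filter] at hvg
    have h := hvg.2 j
    rw [hgdef]
    simp only [dif_pos h]
    exact ⟨(Finset.exists_subset_card_eq h).choose_spec.1,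
      (Finset.exists_subset_card_eq h).choose_spec.2⟩
  have hmaps : ∀ v ∈ good, g v ∈ B := by
    intro v hvg
    rw [hB, Fintype.mem_piFinset]
    intro j
    rw [Finset.mem_powersetCard]
    exact ⟨(hg v hvg j).1.trans (Finset.inter_subset_right), (hg v hvg j).2⟩
  have hBne : B.Nonempty := by
    have hts' : t ≤ s := le_of_lt hts
    have hjt : ∀ j, t ≤ (U j).card := fun j => by rw [hUcard j]; exact hts'
    refine ⟨fun j => (Finset.exists_subset_card_eq (hjt j)).choose, ?_⟩
    rw [hB, Fintype.mem_piFinset]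
    intro j
    rw [Finset.mem_powersetCard]
    exact ⟨(Finset.exists_subset_card_eq (hjt j)).choose_spec.1,
      (Finset.exists_subset_card_eq (hjt j)).choose_spec.2⟩
  obtain ⟨T, hTB, hfib⟩ := Finset.exists_le_card_fiber_of_mul_le_card_of_maps_to
    hmaps hBne (by rw [hBcard, mul_comm]; exact hgoodlb)
  obtain ⟨W, hWsub, hWcard⟩ := Finset.exists_subset_card_eq hfib
  have hWgood : ∀ w ∈ W, w ∈ good := by
    intro w hw
    have := hWsub hw
    rw [Finset.mem_filter] at this
    exact this.1
  have hWfib : ∀ w ∈ W, g w = T := by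
    intro w hw
    have := hWsub hw
    rw [Finset.mem_filter] at this
    exact this.2
  have hTU : ∀ j, T j ⊆ U j ∧ (T j).card = t := by
    intro j
    rw [hB, Fintype.mem_piFinset] at hTB
    have := hTB j
    rw [Finset.mem_powersetCard] at this
    exact this
  have hWT : ∀ w ∈ W, ∀ j, T j ⊆ G.neighborFinset w := by
    intro w hw j
    have h1 := (hg w (hWgood w hw) j).1
    rw [hWfib w hw] at h1
    exact h1.trans (Finset.inter_subset_left)
  have hWnotT : ∀ w ∈ W, ∀ j, w ∉ T j := by
    intro w hw j hmem
    have := hWT w hw j hmem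
    rw [SimpleGraph.mem_neighborFinset] at this
    exact G.irrefl this
  -- build the copy
  set eW := W.orderIsoOfFin hWcard with heW
  set eT := fun j => (T j).orderIsoOfFin (hTU j).2 with heT
  refine ⟨fun i => Fin.lastCases (fun a => (eW a : Fin n)) (fun j a => (eT j a : Fin n)) i,
    ?_, ?_⟩
  · -- injectivity
    intro i a j b heq
    rcases Fin.eq_castSucc_or_eq_last i with ⟨i', rfl⟩ | rfl <;>
      rcases Fin.eq_castSucc_or_eq_last j with ⟨j', rfl⟩ | rfl <;>
      simp only [Fin.lastCases_castSucc, Fin.lastCases_last] at heq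
    · by_cases hij : i' = j'
      · subst hij
        refine ⟨rfl, ?_⟩
        have : eT i' a = eT i' b := Subtype.coe_injective heq
        exact (eT i').injective this
      · exfalso
        have h1 : ((eT i' a : Fin n)) ∈ T i' := (eT i' a).2
        have h2 : ((eT j' b : Fin n)) ∈ T j' := (eT j' b).2
        rw [heq] at h1
        exact hUdisj i' j' hij _ ((hTU i').1 h1) ((hTU j').1 h2)
    · exfalso
      have h1 : ((eT i' a : Fin n)) ∈ T i' := (eT i' a).2
      have h2 : ((eW b : Fin n)) ∈ W := (eW b).2
      rw [heq] at h1
      exact hWnotT _ h2 i' h1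
    · exfalso
      have h1 : ((eT j' b : Fin n)) ∈ T j' := (eT j' b).2
      have h2 : ((eW a : Fin n)) ∈ W := (eW a).2
      rw [← heq] at h1
      exact hWnotT _ h2 j' h1
    · refine ⟨rfl, ?_⟩
      have : eW a = eW b := Subtype.coe_injective heq
      exact eW.injective this
  · -- adjacency
    intro i a j b hij
    rcases Fin.eq_castSucc_or_eq_last i with ⟨i', rfl⟩ | rfl <;>
      rcases Fin.eq_castSucc_or_eq_last j with ⟨j', rfl⟩ | rfl <;>
      simp only [Fin.lastCases_castSucc, Fin.lastCases_last]
    · have hij' : i' ≠ j' := by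
        intro h; apply hij; rw [h]
      exact hUadj i' j' hij' _ ((hTU i').1 (eT i' a).2) _ ((hTU j').1 (eT j' b).2)
    · have h2 : ((eW b : Fin n)) ∈ W := (eW b).2
      have := hWT _ h2 i' (eT i' a).2
      rw [SimpleGraph.mem_neighborFinset] at this
      exact this.symm
    · have h2 : ((eW a : Fin n)) ∈ W := (eW a).2
      have := hWT _ h2 j' (eT j' b).2
      rw [SimpleGraph.mem_neighborFinset] at this
      exact this
    · exact absurd rfl hij

lemma hdegle_aux {n : ℕ} (G : SimpleGraph (Fin n)) [DecidableRel G.Adj] (u : Fin n) :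
    (G.degree u : ℝ) ≤ n := by
  have := G.degree_lt_card_verts u
  simp only [Fintype.card_fin] at this
  exact_mod_cast this.le

lemma hs2_of {ε : ℝ} (hε : 0 < ε) (hε2 : ε ≤ 1/2) (t : ℕ) :
    (1 - ε) * ((t + (⌈(2*t : ℝ)/ε⌉₊ + 1) : ℕ) : ℝ)
      ≤ (1 - ε/2) * (((t + (⌈(2*t : ℝ)/ε⌉₊ + 1) : ℕ) : ℝ) - t) := by
  set k : ℕ := ⌈(2*t : ℝ)/ε⌉₊ + 1 with hk
  have h1 : (2*t : ℝ)/ε ≤ k := by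
    rw [hk]
    push_cast
    have := Nat.le_ceil ((2*(t:ℝ))/ε)
    linarith
  have h2 : (2*(t:ℝ)) ≤ ε * k := by
    rw [div_le_iff₀ hε] at h1
    linarith [mul_comm ε (k:ℝ)]
  have hcast : ((t + k : ℕ) : ℝ) = (t:ℝ) + k := by push_cast; ring
  rw [hcast]
  have ht0 : (0:ℝ) ≤ t := Nat.cast_nonneg t
  nlinarith

lemma hbig_of {ε : ℝ} (hε : 0 < ε) {m n : ℕ} (h : ⌈(2*m : ℝ)/ε⌉₊ ≤ n) :
    ((m:ℕ):ℝ) ≤ ε/2 * n := by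
  have h1 : (2*m : ℝ)/ε ≤ n := by
    refine (Nat.le_ceil _).trans ?_
    exact_mod_cast h
  rw [div_le_iff₀ hε] at h1
  nlinarith

theorem erdos_stone (r : ℕ) (hr : 1 ≤ r) (ε : ℝ) (hε : 0 < ε) (hε2 : ε ≤ 1/2) (t : ℕ) :
    ∃ N : ℕ, ∀ n, N ≤ n → ∀ (G : SimpleGraph (Fin n)) (inst : DecidableRel G.Adj),
      (∀ v, (1 - 1/(r:ℝ) + ε) * n ≤ G.degree v) → KCopy G (r+1) t := by
  induction r, hr using Nat.le_induction generalizing ε t with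
  | base =>
    set s : ℕ := t + (⌈(2*t : ℝ)/ε⌉₊ + 1) with hsdef
    refine ⟨max s (⌈(2*(t * (s.choose t)^1 : ℕ) : ℝ)/ε⌉₊), fun n hn G inst hdeg => ?_⟩
    have hns : s ≤ n := le_trans (le_max_left _ _) hn
    have hdeg' : ∀ u : Fin n, (n:ℝ) - G.degree u ≤ (1 - ε) * n := by
      intro u
      have h := hdeg u
      rw [Nat.cast_one] at h
      have : (1 - 1/(1:ℝ) + ε) * n = ε * n := by ring_nf
      rw [this] at h
      linarith
    apply ext_lemma G inst 1 s t le_rfl hε hdeg'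
    · rw [Nat.cast_one]; linarith
    · omega
    · exact hs2_of hε hε2 t
    · exact hbig_of hε (le_trans (le_max_right _ _) hn)
    · exact kcopy_one G hns
  | succ r hr IH =>
    have hrpos : (0:ℝ) < (r:ℝ) := by exact_mod_cast hr
    have hr1pos : (0:ℝ) < (r:ℝ) + 1 := by linarith
    have hgap : (0:ℝ) < 1/(r:ℝ) - 1/((r:ℝ)+1) := by
      rw [sub_pos]
      apply one_div_lt_one_div_of_lt hrpos
      linarith
    set ε' : ℝ := min (ε + (1/(r:ℝ) - 1/((r:ℝ)+1))) (1/2) with hε'def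
    have hε'pos : 0 < ε' := lt_min (by linarith) (by norm_num)
    have hε'le : ε' ≤ 1/2 := min_le_right _ _
    set s : ℕ := t + (⌈(2*t : ℝ)/ε⌉₊ + 1) with hsdef
    obtain ⟨N₁, hN₁⟩ := IH ε' hε'pos hε'le s
    refine ⟨max N₁ (⌈(2*((t * (s.choose t)^(r+1) : ℕ)) : ℝ)/ε⌉₊), fun n hn G inst hdeg => ?_⟩
    have hcast : ((r+1:ℕ):ℝ) = (r:ℝ) + 1 := by push_cast; ring
    have hdeg2 : ∀ v, (1 - 1/((r:ℝ)+1) + ε) * n ≤ G.degree v := by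
      intro v
      have := hdeg v
      rwa [hcast] at this
    have hdegIH : ∀ v, (1 - 1/(r:ℝ) + ε') * n ≤ G.degree v := by
      intro v
      refine le_trans ?_ (hdeg2 v)
      apply mul_le_mul_of_nonneg_right _ (Nat.cast_nonneg n)
      have h1 : ε' ≤ ε + (1/(r:ℝ) - 1/((r:ℝ)+1)) := min_le_left _ _
      linarith
    have hcopy : KCopy G (r+1) s :=
      hN₁ n (le_trans (le_max_left _ _) hn) G inst hdegIH
    have hβ : ∀ u : Fin n, (n:ℝ) - G.degree u ≤ (1/((r:ℝ)+1) - ε) * n := by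
      intro u
      have := hdeg2 u
      have hd := (hdegle_aux G u)
      nlinarith [Nat.cast_nonneg (α := ℝ) n]
    have hMβ : ((r+1:ℕ):ℝ) * (1/((r:ℝ)+1) - ε) ≤ 1 - ε := by
      rw [hcast]
      have hne : ((r:ℝ)+1) ≠ 0 := by linarith
      have heq : ((r:ℝ)+1) * (1/((r:ℝ)+1) - ε) = 1 - ((r:ℝ)+1)*ε := by
        field_simp
      rw [heq]
      nlinarith [hε.le]
    exact ext_lemma G inst (r+1) s t (by omega) hε hβ hMβ (by omega)
      (hs2_of hε hε2 t) (hbig_of hε (le_trans (le_max_right _ _) hn)) hcopy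

/-! ### embedding of a fixed graph in a blown-up clique -/

lemma contains_of_kcopy {n m t : ℕ} {G : SimpleGraph (Fin n)} {W : Type}
    [Fintype W] (H : SimpleGraph W) (hcol : H.Colorable m)
    (hcard : Fintype.card W ≤ t) (hcopy : KCopy G m t) :
    ∃ f : H →g G, Function.Injective f := by
  obtain ⟨f, finj, fadj⟩ := hcopy
  obtain ⟨C⟩ := hcol
  let e : W ≃ Fin (Fintype.card W) := Fintype.equivFin W
  refine ⟨⟨fun w => f (C w) (Fin.castLE hcard (e w)), ?_⟩, ?_⟩
  · intro a b hab
    exact fadj _ _ _ _ (C.valid hab)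
  · intro a b hab
    obtain ⟨h1, h2⟩ := finj _ _ _ _ hab
    have := Fin.castLE_injective hcard h2
    exact e.injective this

end Stmt15Aux

set_option maxHeartbeats 2000000 in
open Stmt15Aux in
theorem stmt15 {ι : Type} (V : ι → Type) [∀ i, Fintype (V i)]
    (H : (i : ι) → SimpleGraph (V i)) (r : ℕ) (hr : 2 ≤ r)
    (hlb : ∀ i, ((r : ℕ∞) + 1) ≤ (H i).chromaticNumber)
    (hmin : ∃ i, (H i).chromaticNumber = (r : ℕ∞) + 1) :
    Filter.Tendsto
      (fun n : ℕ =>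
        sSup { a : ℝ | ∃ G : SimpleGraph (Fin n),
          (∀ i, ¬ ∃ f : H i →g G, Function.Injective f) ∧ a = algConn G } / (n : ℝ))
      Filter.atTop (nhds (1 - 1 / (r : ℝ))) := by
  classical
  obtain ⟨i0, hi0⟩ := hmin
  have hr0 : 0 < r := by omega
  have hcol : (H i0).Colorable (r+1) := by
    rw [← SimpleGraph.chromaticNumber_le_iff_colorable, hi0]
    push_cast
    exact le_rfl
  set t0 := Fintype.card (V i0) with ht0
  set L : ℝ := 1 - 1/(r:ℝ) with hLdef
  set A : ℕ → Set ℝ := fun n => { a : ℝ | ∃ G : SimpleGraph (Fin n),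
      (∀ i, ¬ ∃ f : H i →g G, Function.Injective f) ∧ a = algConn G } with hA
  have hedge : ∀ i, ∃ a b, (H i).Adj a b := by
    intro i
    by_contra h
    push_neg at h
    have hc1 : (H i).Colorable 1 := ⟨⟨fun _ => 0, fun {a b} hab => absurd hab (h a b)⟩⟩
    have h2 := (hlb i).trans hc1.chromaticNumber_le
    have h3 : ((r+1:ℕ):ℕ∞) ≤ ((1:ℕ):ℕ∞) := by
      refine le_trans (le_of_eq ?_) h2
      push_cast; rfl
    rw [Nat.cast_le] at h3
    omega
  have hbotfree : ∀ n, ∀ i, ¬ ∃ f : H i →g (⊥ : SimpleGraph (Fin n)),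
      Function.Injective f := by
    rintro n i ⟨f, -⟩
    obtain ⟨a, b, hab⟩ := hedge i
    exact f.map_adj hab
  have hturanfree : ∀ n, ∀ i, ¬ ∃ f : H i →g turanGraph n r, Function.Injective f := by
    rintro n i ⟨f, -⟩
    have hcolr : (H i).Colorable r := by
      refine ⟨⟨fun v => ⟨(f v : ℕ) % r, Nat.mod_lt _ hr0⟩, ?_⟩⟩
      intro a b hab
      have hne := f.map_adj hab
      simp only [SimpleGraph.top_adj, Ne, Fin.mk.injEq]
      exact hne
    have h2 := (hlb i).trans hcolr.chromaticNumber_le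
    have h3 : ((r+1:ℕ):ℕ∞) ≤ ((r:ℕ):ℕ∞) := by
      refine le_trans (le_of_eq ?_) h2
      push_cast; rfl
    rw [Nat.cast_le] at h3
    omega
  have hbdd : ∀ n, 2 ≤ n → ∀ a ∈ A n, a ≤ (n:ℝ) := by
    rintro n hn a ⟨G, -, rfl⟩
    exact algConn_le_card hn G
  have hzm : ∀ n, 2 ≤ n → (0:ℝ) ∈ A n :=
    fun n hn => ⟨⊥, hbotfree n, (algConn_bot hn).symm⟩
  have hlow : ∀ n : ℕ, 2 ≤ n → ((n:ℝ) - (((n + r - 1)/r : ℕ) : ℝ)) ≤ sSup (A n) := by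
    intro n hn
    have hmem : algConn (turanGraph n r) ∈ A n := ⟨turanGraph n r, hturanfree n, rfl⟩
    have h1 := le_csSup ⟨(n:ℝ), fun a ha => hbdd n hn a ha⟩ hmem
    exact (turan_algConn_lb hn hr0).trans h1
  rw [Metric.tendsto_atTop]
  intro δ hδ
  set ε' : ℝ := min (δ/4) (1/2) with hε'def
  have hε'pos : 0 < ε' := lt_min (by linarith) one_half_pos
  have hε'le : ε' ≤ 1/2 := min_le_right _ _
  have hε'δ : ε' ≤ δ/4 := min_le_left _ _
  obtain ⟨N₀, hN₀⟩ := erdos_stone r (by omega) ε' hε'pos hε'le t0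
  refine ⟨max (max N₀ 2) (⌈16/δ⌉₊ + ⌈2/δ⌉₊ + 2), fun n hn => ?_⟩
  have hn2 : 2 ≤ n := le_trans (le_trans (le_max_right _ _) (le_max_left _ _)) hn
  have hnN₀ : N₀ ≤ n := le_trans (le_trans (le_max_left _ _) (le_max_left _ _)) hn
  have hnδ : (⌈16/δ⌉₊ + ⌈2/δ⌉₊ + 2 : ℕ) ≤ n := le_trans (le_max_right _ _) hn
  have hnr : (0:ℝ) < n := by
    have : 0 < n := by omega
    exact_mod_cast this
  have hrpos' : (0:ℝ) < r := by exact_mod_cast hr0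
  have h1n := one_sub_inv_pos hn2
  have hc16 : (16:ℝ)/δ ≤ n := by
    have h1 : ⌈(16:ℝ)/δ⌉₊ ≤ n := by omega
    calc (16:ℝ)/δ ≤ ⌈(16:ℝ)/δ⌉₊ := Nat.le_ceil _
      _ ≤ n := by exact_mod_cast h1
  have hc2 : (2:ℝ)/δ ≤ n := by
    have h1 : ⌈(2:ℝ)/δ⌉₊ ≤ n := by omega
    calc (2:ℝ)/δ ≤ ⌈(2:ℝ)/δ⌉₊ := Nat.le_ceil _
      _ ≤ n := by exact_mod_cast h1
  have h4n : (4:ℝ) ≤ n := by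
    have g1 : 1 ≤ ⌈(16:ℝ)/δ⌉₊ := Nat.ceil_pos.2 (by positivity)
    have g2 : 1 ≤ ⌈(2:ℝ)/δ⌉₊ := Nat.ceil_pos.2 (by positivity)
    have : (4:ℕ) ≤ n := by omega
    exact_mod_cast this
  have hL1 : L ≤ 1 := by
    rw [hLdef]
    have : 0 ≤ 1/(r:ℝ) := by positivity
    linarith
  have hupper : sSup (A n) ≤ (L + ε') * n / (1 - 1/n) := by
    apply csSup_le ⟨0, hzm n hn2⟩
    rintro a ⟨G, hGfree, rfl⟩
    letI : DecidableRel G.Adj := Classical.decRel _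
    have hsmall : ∃ v, (G.degree v : ℝ) < (1 - 1/(r:ℝ) + ε') * n := by
      by_contra hcon
      push_neg at hcon
      have hcopy := hN₀ n hnN₀ G _ hcon
      obtain ⟨fhom, finj⟩ := contains_of_kcopy (H i0) hcol le_rfl hcopy
      exact hGfree i0 ⟨fhom, finj⟩
    obtain ⟨v, hv⟩ := hsmall
    have h1 := algConn_le_deg hn2 G v
    have h2 : (G.degree v : ℝ)/(1-1/n) ≤ (L + ε')*n/(1-1/n) := by
      apply (div_le_div_iff_of_pos_right h1n).2
      rw [hLdef]
      exact hv.le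
    exact h1.trans h2
  set S := sSup (A n) with hS
  have hup2 : S/n ≤ L + δ/2 := by
    have key : (L + ε') * n / (1-1/n) ≤ (L + δ/2) * n := by
      rw [div_le_iff₀ h1n]
      have e : (L+δ/2)*n*(1-1/n) = (L+δ/2)*n - (L+δ/2) := by
        field_simp
      rw [e]
      have q1 : (δ/4)*n ≤ (δ/2 - ε')*n :=
        mul_le_mul_of_nonneg_right (by linarith) hnr.le
      have pa : (2:ℝ) ≤ (δ/8)*n := by
        have := mul_le_mul_of_nonneg_left hc16 (by positivity : (0:ℝ) ≤ δ/8)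
        have e2 : (δ/8)*((16:ℝ)/δ) = 2 := by field_simp; ring
        linarith
      have pb : δ/2 ≤ (δ/8)*n := by
        have := mul_le_mul_of_nonneg_left h4n (by positivity : (0:ℝ) ≤ δ/8)
        linarith
      clear_value L ε' S
      nlinarith [q1, pa, pb, hL1]
    have hfin : S ≤ (L + δ/2) * n := hupper.trans key
    rw [div_le_iff₀ hnr]
    exact hfin
  have hlow2 : L - δ/2 ≤ S/n := by
    have hM : (((n + r - 1)/r : ℕ) : ℝ) ≤ (n:ℝ)/r + 1 := by
      have c1 : (((n + r - 1)/r : ℕ) : ℝ) ≤ ((n + r - 1 : ℕ):ℝ)/((r:ℕ):ℝ) :=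
        Nat.cast_div_le
      have c2 : ((n + r - 1 : ℕ):ℝ) ≤ (n:ℝ) + r := by
        have h : (n + r - 1 : ℕ) ≤ n + r := by omega
        exact_mod_cast h
      have c3 : ((n + r - 1 : ℕ):ℝ)/((r:ℕ):ℝ) ≤ ((n:ℝ)+r)/r :=
        (div_le_div_iff_of_pos_right hrpos').2 c2
      have c4 : ((n:ℝ)+r)/r = (n:ℝ)/r + 1 := by field_simp
      linarith
    have hXS : (n:ℝ) - ((n:ℝ)/r + 1) ≤ S := by
      have := hlow n hn2
      linarith
    have hdiv : ((n:ℝ) - ((n:ℝ)/r + 1))/n ≤ S/n :=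
      (div_le_div_iff_of_pos_right hnr).2 hXS
    have e : ((n:ℝ) - ((n:ℝ)/r + 1))/n = 1 - 1/r - 1/n := by
      field_simp
      ring
    have hinv : 1/(n:ℝ) ≤ δ/2 := by
      rw [div_le_iff₀ hnr]
      have := mul_le_mul_of_nonneg_left hc2 (by positivity : (0:ℝ) ≤ δ/2)
      have e2 : (δ/2)*((2:ℝ)/δ) = 1 := by field_simp
      nlinarith
    rw [e] at hdiv
    rw [hLdef]
    linarith
  rw [Real.dist_eq, abs_lt]
  constructor <;> linarith
end

section
/- For every integer r ≥ 3, k ≥ 2 and every ε > 0, there exists N such that every graph G on n ≥ N vertices with algebraic connectivity α(G) ≥ n - ⌈n/r⌉ + εn contains a copy of the Turán graph T_{kr,r} (the complete r-partite graph with all parts of size k). -/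
open SimpleGraph Matrix BigOperators Finset

lemma parts_lemma : ∀ r : ℕ, 1 ≤ r → ∀ (k : ℕ) (ε : ℝ), 0 < ε →
    ∃ N : ℕ, ∀ n : ℕ, N ≤ n → ∀ (G : SimpleGraph (Fin n)) [DecidableRel G.Adj],
      (∀ v : Fin n, ((1 : ℝ) - 1 / r + ε) * n ≤ G.degree v) →
      ∃ A : Fin r → Finset (Fin n),
        (∀ i, (A i).card = k) ∧
        (∀ i j, i ≠ j → Disjoint (A i) (A j)) ∧
        (∀ i j, i ≠ j → ∀ u ∈ A i, ∀ w ∈ A j, G.Adj u w) := by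
  intro r
  induction r with
  | zero => intro h; omega
  | succ r ih =>
    intro _ k ε hε
    rcases Nat.eq_zero_or_pos r with hr0 | hr1
    · -- one part: just pick any k vertices
      subst hr0
      refine ⟨k, fun n hn G _ _ => ?_⟩
      obtain ⟨t, _, htc⟩ := Finset.exists_subset_card_eq (s := (Finset.univ : Finset (Fin n)))
        (n := k) (by simpa using hn)
      refine ⟨fun _ => t, fun _ => htc, fun i j hij => absurd (Fin.fin_one_eq_zero i ▸ (Fin.fin_one_eq_zero j).symm ▸ rfl) hij,
        fun i j hij => absurd (Fin.fin_one_eq_zero i ▸ (Fin.fin_one_eq_zero j).symm ▸ rfl) hij⟩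
    · -- inductive step: r ≥ 1, prove for r + 1 parts
      have hrR : (1:ℝ) ≤ r := by exact_mod_cast hr1
      set K := (r + 1) * (k + 1) with hK
      have hKpos : 0 < K := by positivity
      have hε' : (0:ℝ) < 1 / (r * (r+1)) := by
        apply div_pos one_pos; nlinarith
      obtain ⟨N0, hN0⟩ := ih hr1 K (1 / (r * (r+1))) hε'
      set M := ⌈(r * K : ℝ) / (r + 1)⌉₊ with hM
      set C := k * (K.choose k)^r with hC
      obtain ⟨N1, hN1⟩ := exists_nat_ge (((C : ℝ) + r * K + 1) / (ε * (r+1)))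
      refine ⟨max N0 N1, fun n hn G instAdj hdeg => ?_⟩
      -- apply the induction hypothesis
      have hdeg' : ∀ v : Fin n, ((1 : ℝ) - 1 / r + 1 / (r * (r+1))) * n ≤ G.degree v := by
        intro v
        refine le_trans (mul_le_mul_of_nonneg_right ?_ (Nat.cast_nonneg n)) (hdeg v)
        have hkey : (1:ℝ) - 1/r + 1/(r*(r+1)) = 1 - 1/(r+1) := by
          field_simp
          ring
        rw [hkey]
        push_cast
        linarith
      obtain ⟨B, hBcard, hBdisj, hBadj⟩ :=
        hN0 n (le_trans (le_max_left _ _) hn) G hdeg'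
      set W : Finset (Fin n) := Finset.univ.biUnion B with hW
      have hWcard : W.card = r * K := by
        rw [hW, Finset.card_biUnion (fun i _ j _ hij => hBdisj i j hij)]
        simp [hBcard, Finset.sum_const, Finset.card_univ]
      have hBsubW : ∀ i, B i ⊆ W := fun i =>
        Finset.subset_biUnion_of_mem B (Finset.mem_univ i)
      -- double counting of non-adjacencies into W
      have hdegle : ∀ w : Fin n, G.degree w ≤ n := by
        intro w
        calc G.degree w ≤ Finset.univ.card := Finset.card_le_univ _
        _ = n := by simp
      have hcount : ∑ v : Fin n, ((W.filter (fun w => ¬ G.Adj v w)).card) =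
          ∑ w ∈ W, (n - G.degree w) := by
        simp_rw [Finset.card_filter]
        rw [Finset.sum_comm]
        refine Finset.sum_congr rfl (fun w _ => ?_)
        rw [← Finset.card_filter]
        have h2 : Finset.univ.filter (fun y => G.Adj y w) = G.neighborFinset w := by
          ext u; simp [adj_comm]
        have h3 := Finset.card_filter_add_card_filter_not
          (s := (Finset.univ : Finset (Fin n))) (p := fun y => G.Adj y w)
        rw [h2] at h3
        have h4 : (G.neighborFinset w).card = G.degree w := rfl
        simp only [Finset.card_univ, Fintype.card_fin] at h3
        omega
      -- the sum is small
      have hcountR : (∑ v : Fin n, ((W.filter (fun w => ¬ G.Adj v w)).card : ℝ)) ≤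
          (r * K) * (((1:ℝ)/(r+1) - ε) * n) := by
        have : (∑ v : Fin n, ((W.filter (fun w => ¬ G.Adj v w)).card : ℝ)) =
            ∑ w ∈ W, ((n - G.degree w : ℕ) : ℝ) := by
          rw [← Nat.cast_sum, hcount, Nat.cast_sum]
        rw [this]
        have hterm : ∀ w ∈ W, ((n - G.degree w : ℕ) : ℝ) ≤ ((1:ℝ)/(r+1) - ε) * n := by
          intro w _
          rw [Nat.cast_sub (hdegle w)]
          have := hdeg w
          push_cast at this ⊢
          linarith
        calc (∑ w ∈ W, ((n - G.degree w : ℕ) : ℝ)) ≤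
            ∑ _w ∈ W, ((1:ℝ)/(r+1) - ε) * n := Finset.sum_le_sum hterm
        _ = ((W.card : ℕ) : ℝ) * (((1:ℝ)/(r+1) - ε) * n) := by
            rw [Finset.sum_const, nsmul_eq_mul]
        _ = (r * K) * (((1:ℝ)/(r+1) - ε) * n) := by
            rw [hWcard]; push_cast; ring
      -- bad vertices
      set Bbad : Finset (Fin n) :=
        Finset.univ.filter (fun v => M ≤ (W.filter (fun w => ¬ G.Adj v w)).card) with hBbad
      have hBbadcount : (Bbad.card : ℝ) * M ≤ (r * K) * (((1:ℝ)/(r+1) - ε) * n) := by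
        have h1 : Bbad.card * M ≤ ∑ v ∈ Bbad, (W.filter (fun w => ¬ G.Adj v w)).card := by
          have := Finset.card_nsmul_le_sum Bbad
            (fun v => (W.filter (fun w => ¬ G.Adj v w)).card) M
            (fun v hv => (Finset.mem_filter.mp hv).2)
          simpa [smul_eq_mul] using this
        have h2 : ∑ v ∈ Bbad, (W.filter (fun w => ¬ G.Adj v w)).card ≤
            ∑ v : Fin n, (W.filter (fun w => ¬ G.Adj v w)).card :=
          Finset.sum_le_sum_of_subset (Finset.subset_univ _)
        calc ((Bbad.card : ℝ)) * M = ((Bbad.card * M : ℕ) : ℝ) := by push_cast; ring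
        _ ≤ ((∑ v : Fin n, (W.filter (fun w => ¬ G.Adj v w)).card : ℕ) : ℝ) := by
            exact_mod_cast le_trans h1 h2
        _ ≤ (r * K) * (((1:ℝ)/(r+1) - ε) * n) := by
            rw [Nat.cast_sum]; exact hcountR
      have hMlow : (r*K : ℝ)/(r+1) ≤ M := Nat.le_ceil _
      have hMup : (M:ℝ) < r*K/(r+1) + 1 := by
        refine Nat.ceil_lt_add_one ?_
        positivity
      have hrKpos : (0:ℝ) < r * K / (r+1) := by
        have : (0:ℝ) < (K:ℝ) := by exact_mod_cast hKpos
        apply div_pos (by nlinarith) (by nlinarith)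
      have hBbadR : (Bbad.card : ℝ) ≤ (1 - ε*(r+1)) * n := by
        have h1 : (Bbad.card : ℝ) * (r*K/(r+1)) ≤ (r * K) * (((1:ℝ)/(r+1) - ε) * n) :=
          le_trans (mul_le_mul_of_nonneg_left hMlow (Nat.cast_nonneg _)) hBbadcount
        have h2 : (Bbad.card : ℝ) ≤ (r * K) * (((1:ℝ)/(r+1) - ε) * n) / (r*K/(r+1)) :=
          (le_div_iff₀ hrKpos).mpr h1
        refine le_trans h2 (le_of_eq ?_)
        have hKne : (K:ℝ) ≠ 0 := by exact_mod_cast hKpos.ne'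
        have hrne : (r:ℝ) ≠ 0 := Nat.cast_ne_zero.mpr hr1.ne'
        field_simp
      -- the good set U
      set U : Finset (Fin n) := Finset.univ \ (W ∪ Bbad) with hU
      have hMK : M + k + 1 ≤ K := by
        have hKr : (r:ℝ) * K / (r+1) + (k+1) = K := by
          have : (K:ℝ) = ((r:ℝ)+1) * ((k:ℝ)+1) := by rw [hK]; push_cast; ring
          field_simp [this]
          rw [this]
          ring
        have h11 : (M:ℝ) + k < K := by
          have h5 : (M:ℝ) < (r:ℝ) * K / (r+1) + 1 := hMup
          nlinarith [hKr]
        have h12 : M + k < K := by exact_mod_cast h11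
        omega
      have hU1 : ∀ v ∈ U, ∀ i : Fin r, k + 1 ≤ ((B i).filter (fun w => G.Adj v w)).card := by
        intro v hv i
        have hvnb : v ∉ Bbad := by
          rw [hU] at hv
          simp only [Finset.mem_sdiff, Finset.mem_union] at hv
          exact fun h => hv.2 (Or.inr h)
        have hvM : ((B i).filter (fun w => ¬ G.Adj v w)).card < M := by
          have hsub : (B i).filter (fun w => ¬ G.Adj v w) ⊆ W.filter (fun w => ¬ G.Adj v w) :=
            Finset.filter_subset_filter _ (hBsubW i)
          have h6 : ¬ (M ≤ (W.filter (fun w => ¬ G.Adj v w)).card) := by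
            rw [hBbad] at hvnb
            simpa using hvnb
          have := Finset.card_le_card hsub
          omega
        have hsplit := Finset.card_filter_add_card_filter_not
          (s := B i) (p := fun w => G.Adj v w)
        rw [hBcard i] at hsplit
        omega
      -- U is large
      have hUcard : (C : ℝ) ≤ U.card := by
        have hsub : (W ∪ Bbad).card ≤ n := by
          have := Finset.card_le_univ (W ∪ Bbad)
          simpa using this
        have hUc : U.card = n - (W ∪ Bbad).card := by
          rw [hU, Finset.card_sdiff_of_subset (Finset.subset_univ _)]
          simp
        have hUR : ((U.card : ℕ) : ℝ) ≥ (n : ℝ) - W.card - Bbad.card := by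
          rw [hUc, Nat.cast_sub hsub]
          have := Finset.card_union_le W Bbad
          have h7 : ((W ∪ Bbad).card : ℝ) ≤ (W.card : ℝ) + Bbad.card := by exact_mod_cast this
          linarith
        have hWR : ((W.card : ℕ) : ℝ) = (r : ℝ) * K := by rw [hWcard]; push_cast; ring
        have hnN1 : (N1 : ℝ) ≤ n := by
          have : N1 ≤ n := le_trans (le_max_right _ _) hn
          exact_mod_cast this
        have hεr : (0:ℝ) < ε * ((r:ℝ)+1) := mul_pos hε (by positivity)
        have h8 : (C : ℝ) + (r:ℝ) * K + 1 ≤ ε * (r+1) * n := by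
          have := (div_le_iff₀ hεr).mp (le_trans hN1 hnN1)
          linarith
        have hexp : (1 - ε*((r:ℝ)+1))*n = n - ε*((r:ℝ)+1)*n := by ring
        linarith [hBbadR, hUR, hWR, h8, hexp]
      -- choose the k-subsets of neighbours
      have hex : ∀ v : Fin n, ∃ T : Fin r → Finset (Fin n), v ∈ U →
          ∀ i, T i ⊆ (B i).filter (fun w => G.Adj v w) ∧ (T i).card = k := by
        intro v
        by_cases hv : v ∈ U
        · choose T hT1 hT2 using fun i => Finset.exists_subset_card_eq
            (s := (B i).filter (fun w => G.Adj v w)) (n := k)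
            (le_trans (Nat.le_succ k) (hU1 v hv i))
          exact ⟨T, fun _ i => ⟨hT1 i, hT2 i⟩⟩
        · exact ⟨fun _ => ∅, fun h => absurd h hv⟩
      choose F hF using hex
      -- pigeonhole
      have hmaps : ∀ v ∈ U, F v ∈ Fintype.piFinset (fun i : Fin r => (B i).powersetCard k) := by
        intro v hv
        rw [Fintype.mem_piFinset]
        intro i
        rw [Finset.mem_powersetCard]
        exact ⟨(hF v hv i).1.trans (Finset.filter_subset _ _), (hF v hv i).2⟩
      have htne : (Fintype.piFinset (fun i : Fin r => (B i).powersetCard k)).Nonempty := by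
        rw [Fintype.piFinset_nonempty]
        intro i
        rw [Finset.powersetCard_nonempty, hBcard i, hK]
        calc k ≤ k + 1 := Nat.le_succ k
        _ ≤ (r+1)*(k+1) := Nat.le_mul_of_pos_left _ (Nat.succ_pos r)
      have hcardt : (Fintype.piFinset (fun i : Fin r => (B i).powersetCard k)).card * k ≤
          U.card := by
        have h9 : (Fintype.piFinset (fun i : Fin r => (B i).powersetCard k)).card =
            (K.choose k)^r := by
          rw [Fintype.card_piFinset]
          simp [Finset.card_powersetCard, hBcard]
        rw [h9]
        have : (K.choose k)^r * k = C := by rw [hC]; ring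
        rw [this]
        exact_mod_cast le_trans (le_of_eq rfl) (by exact_mod_cast hUcard)
      obtain ⟨y, hyt, hyfib⟩ :=
        Finset.exists_le_card_fiber_of_mul_le_card_of_maps_to hmaps htne hcardt
      obtain ⟨Alast, hAsub, hAcard⟩ := Finset.exists_subset_card_eq hyfib
      -- facts about y and Alast
      have hyB : ∀ i, y i ⊆ B i ∧ (y i).card = k := by
        intro i
        rw [Fintype.mem_piFinset] at hyt
        have := hyt i
        rwa [Finset.mem_powersetCard] at this
      have hAlastU : Alast ⊆ U := hAsub.trans (Finset.filter_subset _ _)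
      have hAlastAdj : ∀ v ∈ Alast, ∀ i, ∀ u ∈ y i, G.Adj v u := by
        intro v hv i u hu
        have hvf := hAsub hv
        rw [Finset.mem_filter] at hvf
        obtain ⟨hvU, hFv⟩ := hvf
        have h10 := (hF v hvU i).1
        rw [hFv] at h10
        exact (Finset.mem_filter.mp (h10 hu)).2
      have hyW : ∀ i, y i ⊆ W := fun i => (hyB i).1.trans (hBsubW i)
      have hAlastW : ∀ v ∈ Alast, v ∉ W := by
        intro v hv hvW
        have := hAlastU hv
        rw [hU] at this
        simp only [Finset.mem_sdiff, Finset.mem_union] at this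
        exact this.2 (Or.inl hvW)
      -- assemble
      refine ⟨Fin.snoc (fun i => y i) Alast, ?_, ?_, ?_⟩
      · intro i
        refine Fin.lastCases ?_ ?_ i
        · simp [Fin.snoc_last, hAcard]
        · intro j; simp [Fin.snoc_castSucc, (hyB j).2]
      · intro i j hij
        induction i using Fin.lastCases with
        | last =>
          induction j using Fin.lastCases with
          | last => exact absurd rfl hij
          | cast j' =>
            simp only [Fin.snoc_last, Fin.snoc_castSucc]
            exact Finset.disjoint_right.mpr (fun u hu hu' => hAlastW u hu' (hyW j' hu))
        | cast i' =>
          induction j using Fin.lastCases with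
          | last =>
            simp only [Fin.snoc_last, Fin.snoc_castSucc]
            exact Finset.disjoint_left.mpr (fun u hu hu' => hAlastW u hu' (hyW i' hu))
          | cast j' =>
            simp only [Fin.snoc_castSucc]
            have hij' : i' ≠ j' := fun h => hij (by rw [h])
            exact (hBdisj i' j' hij').mono (hyB i').1 (hyB j').1
      · intro i j hij
        induction i using Fin.lastCases with
        | last =>
          induction j using Fin.lastCases with
          | last => exact absurd rfl hij
          | cast j' =>
            simp only [Fin.snoc_last, Fin.snoc_castSucc]
            intro u hu w hw
            exact hAlastAdj u hu j' w hw
        | cast i' =>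
          induction j using Fin.lastCases with
          | last =>
            simp only [Fin.snoc_last, Fin.snoc_castSucc]
            intro u hu w hw
            exact (hAlastAdj w hw i' u hu).symm
          | cast j' =>
            simp only [Fin.snoc_castSucc]
            have hij' : i' ≠ j' := fun h => hij (by rw [h])
            intro u hu w hw
            exact hBadj i' j' hij' u ((hyB i').1 hu) w ((hyB j').1 hw)


-- quadratic form of the Laplacian at the Fiedler test vector
lemma lap_quad {n : ℕ} [DecidableEq (Fin n)] (G : SimpleGraph (Fin n))
    [DecidableRel G.Adj] (v : Fin n) :
    (fun u => if u = v then (n:ℝ) - 1 else -1) ⬝ᵥ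
      ((G.lapMatrix ℝ).mulVec (fun u => if u = v then (n:ℝ) - 1 else -1)) =
    (n:ℝ)^2 * (G.degree v) := by
  set x : Fin n → ℝ := fun u => if u = v then (n:ℝ) - 1 else -1 with hxdef
  have h1 : x ⬝ᵥ ((G.lapMatrix ℝ).mulVec x) = Matrix.toLinearMap₂' ℝ (G.lapMatrix ℝ) x x :=
    (Matrix.toLinearMap₂'_apply' _ _ _).symm
  rw [h1, lapMatrix_toLinearMap₂']
  have h2 : ∀ i j : Fin n, i ≠ j →
      (x i - x j)^2 = (if i = v then (n:ℝ)^2 else 0) + (if j = v then (n:ℝ)^2 else 0) := by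
    intro i j hij
    by_cases hi : i = v <;> by_cases hj : j = v
    · exact absurd (hi.trans hj.symm) hij
    · simp [hxdef, hi, hj]; try ring
    · simp [hxdef, hi, hj]; try ring
    · simp [hxdef, hi, hj]
  have h3 : ∀ i j : Fin n, (if G.Adj i j then (x i - x j)^2 else 0) =
      (if G.Adj i j then (if i = v then (n:ℝ)^2 else 0) else 0) +
      (if G.Adj i j then (if j = v then (n:ℝ)^2 else 0) else 0) := by
    intro i j
    by_cases ha : G.Adj i j
    · simp only [ha, if_true]; exact h2 i j (G.ne_of_adj ha)
    · simp [ha]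
  simp_rw [h3, Finset.sum_add_distrib]
  have hdeg1 : ∀ (i : Fin n) (c : ℝ), (∑ j : Fin n, if G.Adj i j then c else 0) =
      (G.degree i : ℝ) * c := by
    intro i c
    rw [← Finset.sum_filter, ← SimpleGraph.neighborFinset_eq_filter, Finset.sum_const,
      nsmul_eq_mul]
    rfl
  have hdeg2 : ∀ (j : Fin n) (c : ℝ), (∑ i : Fin n, if G.Adj i j then c else 0) =
      (G.degree j : ℝ) * c := by
    intro j c
    have h0 : ∀ i : Fin n, (if G.Adj i j then c else 0) = (if G.Adj j i then c else 0) :=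
      fun i => if_congr (adj_comm G i j) rfl rfl
    rw [Finset.sum_congr rfl (fun i _ => h0 i)]
    exact hdeg1 j c
  have hS1 : (∑ i : Fin n, ∑ j : Fin n, if G.Adj i j then (if i = v then (n:ℝ)^2 else 0) else 0)
      = (G.degree v : ℝ) * (n:ℝ)^2 := by
    have : ∀ i : Fin n, (∑ j : Fin n, if G.Adj i j then (if i = v then (n:ℝ)^2 else 0) else 0)
        = if i = v then (G.degree i : ℝ) * (n:ℝ)^2 else 0 := by
      intro i
      by_cases hi : i = v
      · subst hi; simp only [if_true]; exact hdeg1 i _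
      · simp [hi]
    simp_rw [this]
    rw [Finset.sum_ite_eq' Finset.univ v (fun i => (G.degree i : ℝ) * (n:ℝ)^2)]
    simp
  have hS2 : (∑ i : Fin n, ∑ j : Fin n, if G.Adj i j then (if j = v then (n:ℝ)^2 else 0) else 0)
      = (G.degree v : ℝ) * (n:ℝ)^2 := by
    rw [Finset.sum_comm]
    have : ∀ j : Fin n, (∑ i : Fin n, if G.Adj i j then (if j = v then (n:ℝ)^2 else 0) else 0)
        = if j = v then (G.degree j : ℝ) * (n:ℝ)^2 else 0 := by
      intro j
      by_cases hj : j = v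
      · subst hj; simp only [if_true]; exact hdeg2 j _
      · simp [hj]
    simp_rw [this]
    rw [Finset.sum_ite_eq' Finset.univ v (fun j => (G.degree j : ℝ) * (n:ℝ)^2)]
    simp
  rw [hS1, hS2]
  ring

lemma fiedler_sum {n : ℕ} (v : Fin n) :
    ∑ u : Fin n, (if u = v then (n:ℝ) - 1 else -1) = 0 := by
  have h : ∀ u : Fin n, (if u = v then (n:ℝ) - 1 else -1) =
      (if u = v then (n:ℝ) else 0) - 1 := by
    intro u; by_cases h : u = v <;> simp [h]
  simp_rw [h, Finset.sum_sub_distrib, Finset.sum_ite_eq' Finset.univ v (fun _ => (n:ℝ))]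
  simp

lemma fiedler_norm {n : ℕ} (v : Fin n) :
    (fun u => if u = v then (n:ℝ) - 1 else -1) ⬝ᵥ (fun u => if u = v then (n:ℝ) - 1 else -1)
      = (n:ℝ) * ((n:ℝ) - 1) := by
  have h : ∀ u : Fin n, (if u = v then (n:ℝ) - 1 else -1) * (if u = v then (n:ℝ) - 1 else -1)
      = (if u = v then ((n:ℝ)-1)^2 - 1 else 0) + 1 := by
    intro u; by_cases h : u = v
    · simp [h]; ring
    · simp [h]
  simp only [dotProduct]
  simp_rw [h, Finset.sum_add_distrib, Finset.sum_ite_eq' Finset.univ v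
    (fun _ => ((n:ℝ)-1)^2 - 1)]
  simp
  ring

lemma algConn_le_deg' {n : ℕ} (hn : 2 ≤ n) (G : SimpleGraph (Fin n))
    (d1 : DecidableEq (Fin n)) (d2 : DecidableRel G.Adj) (v : Fin n) :
    sInf { a : ℝ | ∃ x : Fin n → ℝ, x ≠ 0 ∧ ∑ u, x u = 0 ∧
      a = (x ⬝ᵥ (@SimpleGraph.lapMatrix (Fin n) ℝ _ G d2 d1 _).mulVec x) / (x ⬝ᵥ x) } *
      ((n:ℝ) - 1) ≤ (n:ℝ) * (G.degree v) := by
  have hn2 : (2:ℝ) ≤ (n:ℝ) := by exact_mod_cast hn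
  have hn1 : (1:ℝ) ≤ (n:ℝ) - 1 := by linarith
  have hnpos : (0:ℝ) < n := by linarith
  obtain rfl : d1 = instDecidableEqFin n := by
    funext a b
    exact Subsingleton.elim _ _
  have hLL : (@SimpleGraph.lapMatrix (Fin n) ℝ _ G d2 (instDecidableEqFin n) _) = G.lapMatrix ℝ := by
    congr!
  set x : Fin n → ℝ := fun u => if u = v then (n:ℝ) - 1 else -1 with hxdef
  have hx0 : x ≠ 0 := by
    intro h
    have h2 := congrFun h v
    simp [hxdef] at h2
    linarith
  have hbdd : BddBelow { a : ℝ | ∃ x : Fin n → ℝ, x ≠ 0 ∧ ∑ u, x u = 0 ∧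
      a = (x ⬝ᵥ (@SimpleGraph.lapMatrix (Fin n) ℝ _ G d2 (instDecidableEqFin n) _).mulVec x) / (x ⬝ᵥ x) } := by
    refine ⟨0, fun a ha => ?_⟩
    obtain ⟨y, hy0, hysum, rfl⟩ := ha
    rw [hLL]
    apply div_nonneg
    · have h2 := (SimpleGraph.posSemidef_lapMatrix ℝ G).dotProduct_mulVec_nonneg y
      rwa [star_trivial] at h2
    · exact Finset.sum_nonneg fun u _ => mul_self_nonneg (y u)
  have hmem : ((x ⬝ᵥ (@SimpleGraph.lapMatrix (Fin n) ℝ _ G d2 (instDecidableEqFin n) _).mulVec x) / (x ⬝ᵥ x)) ∈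
      { a : ℝ | ∃ x : Fin n → ℝ, x ≠ 0 ∧ ∑ u, x u = 0 ∧
      a = (x ⬝ᵥ (@SimpleGraph.lapMatrix (Fin n) ℝ _ G d2 (instDecidableEqFin n) _).mulVec x) / (x ⬝ᵥ x) } :=
    ⟨x, hx0, by simpa [hxdef] using fiedler_sum v, rfl⟩
  have h := csInf_le hbdd hmem
  rw [hLL] at h
  have hq : (x ⬝ᵥ (G.lapMatrix ℝ).mulVec x) = (n:ℝ)^2 * (G.degree v) := by
    simpa [hxdef] using @lap_quad n _ G d2 v
  have hnn : (x ⬝ᵥ x) = (n:ℝ) * ((n:ℝ) - 1) := by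
    simpa [hxdef] using fiedler_norm v
  rw [hq, hnn] at h
  have hpos : (0:ℝ) < (n:ℝ) * ((n:ℝ) - 1) := by nlinarith
  have h2 : sInf { a : ℝ | ∃ x : Fin n → ℝ, x ≠ 0 ∧ ∑ u, x u = 0 ∧
      a = (x ⬝ᵥ (@SimpleGraph.lapMatrix (Fin n) ℝ _ G d2 (instDecidableEqFin n) _).mulVec x) / (x ⬝ᵥ x) } *
      ((n:ℝ) * ((n:ℝ) - 1)) ≤ (n:ℝ)^2 * (G.degree v) := (le_div_iff₀ hpos).mp h
  refine le_of_mul_le_mul_left ?_ hnpos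
  nlinarith [h2]

theorem stmt16 (r k : ℕ) (hr : 3 ≤ r) (hk : 2 ≤ k) (ε : ℝ) (hε : 0 < ε) :
    ∃ N : ℕ, ∀ n : ℕ, N ≤ n → ∀ G : SimpleGraph (Fin n),
      (n : ℝ) - ⌈(n : ℝ) / (r : ℝ)⌉ + ε * n ≤ algConn G →
      ∃ f : SimpleGraph.turanGraph (k * r) r →g G, Function.Injective f := by
  have hε2 : 0 < ε/2 := half_pos hε
  obtain ⟨N0, hN0⟩ := parts_lemma r (by omega) k (ε/2) hε2
  obtain ⟨N1, hN1⟩ := exists_nat_ge ((4/ε) + 2)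
  refine ⟨max (max N0 N1) 2, fun n hn G halg => ?_⟩
  letI dRel : DecidableRel G.Adj := Classical.decRel G.Adj
  have hn2 : 2 ≤ n := le_trans (le_max_right _ _) hn
  have hn0 : N0 ≤ n := le_trans (le_trans (le_max_left _ _) (le_max_left _ _)) hn
  have hnN1 : (N1:ℝ) ≤ n := by
    exact_mod_cast le_trans (le_trans (le_max_right _ _) (le_max_left _ _)) hn
  have hrpos' : 0 < r := by omega
  have hrpos : (0:ℝ) < r := by exact_mod_cast hrpos'
  have hn2R : (2:ℝ) ≤ n := by exact_mod_cast hn2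
  have hnpos : (0:ℝ) < n := by linarith
  have hn4 : 4/ε + 2 ≤ (n:ℝ) := le_trans hN1 hnN1
  have hεn : 4 + 2*ε ≤ ε * n := by
    have h := mul_le_mul_of_nonneg_left hn4 (le_of_lt hε)
    have h2 : ε * (4/ε + 2) = 4 + 2*ε := by field_simp
    linarith
  -- minimum degree bound from the algebraic connectivity
  have hdeg : ∀ v : Fin n, ((1:ℝ) - 1/r + ε/2) * n ≤ G.degree v := by
    intro v
    have h2 : algConn G * ((n:ℝ) - 1) ≤ (n:ℝ) * G.degree v :=
      algConn_le_deg' hn2 G (Classical.decEq (Fin n)) dRel v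
    have hceil : (⌈(n:ℝ)/(r:ℝ)⌉ : ℝ) < (n:ℝ)/r + 1 := Int.ceil_lt_add_one _
    have halg2 : ((1:ℝ) - 1/r + ε) * n - 1 ≤ algConn G := by
      have hstep : (n:ℝ) - ((n:ℝ)/r + 1) + ε*n ≤ (n:ℝ) - ⌈(n:ℝ)/(r:ℝ)⌉ + ε*n := by linarith
      calc ((1:ℝ) - 1/r + ε) * n - 1 = (n:ℝ) - ((n:ℝ)/r + 1) + ε*n := by
            field_simp
            try ring
      _ ≤ (n:ℝ) - ⌈(n:ℝ)/(r:ℝ)⌉ + ε*n := hstep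
      _ ≤ algConn G := halg
    have hLn : (((1:ℝ) - 1/r + ε) * n - 1) * ((n:ℝ) - 1) ≤ (n:ℝ) * G.degree v :=
      le_trans (mul_le_mul_of_nonneg_right halg2 (by linarith)) h2
    have hinv : (0:ℝ) < 1/r := by positivity
    have hεnn : (4 + 2*ε) * n ≤ ε * n * n :=
      mul_le_mul_of_nonneg_right hεn (le_of_lt hnpos)
    refine le_of_mul_le_mul_left ?_ hnpos
    nlinarith [hLn, hεnn, hinv, mul_pos hinv hnpos]
  obtain ⟨A, hAcard, hAdisj, hAadj⟩ := hN0 n hn0 G hdeg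
  -- build the embedding of the Turán graph
  have hdiv1 : ∀ v : Fin (k*r), (v : ℕ) % r < r := fun v => Nat.mod_lt _ hrpos'
  have hdiv2 : ∀ v : Fin (k*r), (v : ℕ) / r < k := fun v =>
    (Nat.div_lt_iff_lt_mul hrpos').mpr v.isLt
  set e : Fin r → Fin k → Fin n :=
    fun i t => ((A i).orderIsoOfFin (hAcard i) t : Fin n) with he
  have hemem : ∀ i t, e i t ∈ A i := fun i t => ((A i).orderIsoOfFin (hAcard i) t).prop
  have heinj : ∀ i, Function.Injective (e i) := by
    intro i t1 t2 h
    have := Subtype.coe_injective (a₁ := (A i).orderIsoOfFin (hAcard i) t1)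
      (a₂ := (A i).orderIsoOfFin (hAcard i) t2) h
    exact ((A i).orderIsoOfFin (hAcard i)).injective this
  set fmap : Fin (k*r) → Fin n :=
    fun v => e ⟨(v : ℕ) % r, hdiv1 v⟩ ⟨(v : ℕ) / r, hdiv2 v⟩ with hfmap
  refine ⟨⟨fmap, ?_⟩, ?_⟩
  · intro a b hab
    have hab' : (a : ℕ) % r ≠ (b : ℕ) % r := hab
    have hne : (⟨(a:ℕ) % r, hdiv1 a⟩ : Fin r) ≠ ⟨(b:ℕ) % r, hdiv1 b⟩ :=
      fun h => hab' (congrArg Fin.val h)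
    exact hAadj _ _ hne _ (hemem _ _) _ (hemem _ _)
  · intro a b hab
    have hab2 : e ⟨(a:ℕ) % r, hdiv1 a⟩ ⟨(a:ℕ) / r, hdiv2 a⟩ =
        e ⟨(b:ℕ) % r, hdiv1 b⟩ ⟨(b:ℕ) / r, hdiv2 b⟩ := hab
    have hii : (⟨(a:ℕ) % r, hdiv1 a⟩ : Fin r) = ⟨(b:ℕ) % r, hdiv1 b⟩ := by
      by_contra hne
      have hm1 := hemem ⟨(a:ℕ) % r, hdiv1 a⟩ ⟨(a:ℕ) / r, hdiv2 a⟩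
      have hm2 := hemem ⟨(b:ℕ) % r, hdiv1 b⟩ ⟨(b:ℕ) / r, hdiv2 b⟩
      rw [hab2] at hm1
      exact Finset.disjoint_left.mp (hAdisj _ _ hne) hm1 hm2
    rw [← hii] at hab2
    have ht := heinj _ hab2
    have hmod : (a:ℕ) % r = (b:ℕ) % r := congrArg Fin.val hii
    have hdiv : (a:ℕ) / r = (b:ℕ) / r := congrArg Fin.val ht
    have hval : (a:ℕ) = (b:ℕ) := by
      conv_lhs => rw [← Nat.div_add_mod (a:ℕ) r]
      conv_rhs => rw [← Nat.div_add_mod (b:ℕ) r]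
      rw [hmod, hdiv]
    exact Fin.ext hval
end

section
/- Let G be a graph on n vertices not containing K_{r+1} with n = kr + t, 0 < t < r, and α(G) = n - (k+1). Then the minimum degree of G equals n - k - 1, and the set U of vertices of minimum degree has size at least t(k+1), and moreover α(G) = κ(G) = δ(G) = n - k - 1. -/
open SimpleGraph Matrix BigOperators

set_option maxHeartbeats 1600000

/-- The vertex connectivity of `G` : the least size of a set of vertices whose removal
leaves a graph that is not connected. -/
noncomputable def vertConn {V : Type*} [Fintype V] [DecidableEq V] (G : SimpleGraph V) : ℕ :=
  sInf { m : ℕ | ∃ S : Finset V, S.card = m ∧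
    ¬ (G.induce (↑(Sᶜ) : Set V)).Connected }

lemma count_mod_fin {n r k t : ℕ} (hn : n = k * r + t) (ht : t < r) (i : ℕ) (hi : i < r) :
    (Finset.univ.filter fun w : Fin n => (w : ℕ) % r = i).card
      = k + if i < t then 1 else 0 := by
  classical
  have hr0 : 0 < r := lt_of_le_of_lt (Nat.zero_le _) ht
  have h1 : (Finset.univ.filter fun w : Fin n => (w : ℕ) % r = i).card
      = ((Finset.range n).filter fun w => w % r = i).card := by
    rw [Finset.card_filter, Finset.card_filter,
      Fin.sum_univ_eq_sum_range (fun j => if j % r = i then 1 else 0)]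
  have h2 : ((Finset.range n).filter fun w => w % r = i)
      = ((Finset.range n).filter (· ≡ i [MOD r])) := by
    apply Finset.filter_congr
    intro j _
    simp [Nat.ModEq, Nat.mod_eq_of_lt hi]
  have hdiv : n / r = k := by
    rw [hn, mul_comm, Nat.mul_add_div hr0, Nat.div_eq_of_lt ht, add_zero]
  have hmod : n % r = t := by
    rw [hn, Nat.add_mod, Nat.mul_mod_left]
    simp [Nat.mod_eq_of_lt ht]
  rw [h1, h2, ← Nat.count_eq_card_filter_range, Nat.count_modEq_card n hr0 i,
    hdiv, hmod, Nat.mod_eq_of_lt hi]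

lemma turan_count {n r k t : ℕ} (hn : n = k * r + t) (ht : t < r) :
    2 * (turanGraph n r).edgeFinset.card + (n * k + t * (k + 1)) = n * n := by
  classical
  have hr0 : 0 < r := lt_of_le_of_lt (Nat.zero_le _) ht
  have key : ∀ v : Fin n, (turanGraph n r).degree v
      + (Finset.univ.filter fun w : Fin n => (w : ℕ) % r = (v : ℕ) % r).card = n := by
    intro v
    have hdeg : (turanGraph n r).degree v
        = (Finset.univ.filter fun w : Fin n => ¬ ((w : ℕ) % r = (v : ℕ) % r)).card := by
      rw [← card_neighborFinset_eq_degree]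
      congr 1
      ext w
      simp only [SimpleGraph.mem_neighborFinset, Finset.mem_filter, Finset.mem_univ, true_and]
      show (v : ℕ) % r ≠ (w : ℕ) % r ↔ _
      exact ⟨fun h h2 => h h2.symm, fun h h2 => h h2.symm⟩
    rw [hdeg, add_comm, Finset.card_filter_add_card_filter_not, Finset.card_univ,
      Fintype.card_fin]
  have hcount : ∀ v : Fin n,
      (Finset.univ.filter fun w : Fin n => (w : ℕ) % r = (v : ℕ) % r).card
        = k + if (v : ℕ) % r < t then 1 else 0 :=
    fun v => count_mod_fin hn ht _ (Nat.mod_lt _ hr0)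
  have hfil : (∑ v : Fin n, if (v : ℕ) % r < t then 1 else 0) = t * (k + 1) := by
    have e1 : ∀ v : Fin n, (if (v : ℕ) % r < t then 1 else 0)
        = ∑ i ∈ Finset.range t, if (v : ℕ) % r = i then 1 else 0 := by
      intro v
      rw [Finset.sum_ite_eq (Finset.range t) ((v : ℕ) % r) (fun _ => 1)]
      simp [Finset.mem_range]
    rw [Finset.sum_congr rfl fun v _ => e1 v, Finset.sum_comm]
    have e2 : ∀ i ∈ Finset.range t,
        (∑ v : Fin n, if (v : ℕ) % r = i then 1 else 0) = k + 1 := by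
      intro i hi
      have hit := Finset.mem_range.mp hi
      rw [← Finset.card_filter, count_mod_fin hn ht i (hit.trans ht), if_pos hit]
    rw [Finset.sum_congr rfl e2, Finset.sum_const, Finset.card_range, smul_eq_mul]
  have hcsum : ∑ v : Fin n,
      (Finset.univ.filter fun w : Fin n => (w : ℕ) % r = (v : ℕ) % r).card
        = n * k + t * (k + 1) := by
    rw [Finset.sum_congr rfl fun v _ => hcount v, Finset.sum_add_distrib, Finset.sum_const,
      Finset.card_univ, Fintype.card_fin, smul_eq_mul, hfil]
  have hA : ∑ v : Fin n, ((turanGraph n r).degree v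
      + (Finset.univ.filter fun w : Fin n => (w : ℕ) % r = (v : ℕ) % r).card) = n * n := by
    rw [Finset.sum_congr rfl fun v _ => key v, Finset.sum_const, Finset.card_univ,
      Fintype.card_fin, smul_eq_mul]
  rw [Finset.sum_add_distrib, hcsum, sum_degrees_eq_twice_card_edges] at hA
  exact hA

lemma edge_bound {n r : ℕ} (hr0 : 0 < r) (G : SimpleGraph (Fin n)) [DecidableRel G.Adj]
    (hfree : G.CliqueFree (r + 1)) :
    G.edgeFinset.card ≤ (turanGraph n r).edgeFinset.card := by
  obtain ⟨H, hd, hH⟩ := exists_isTuranMaximal (V := Fin n) hr0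
  obtain ⟨iso⟩ := hH.nonempty_iso_turanGraph
  have h1 := hH.2 hfree
  have iso2 : turanGraph (Fintype.card (Fin n)) r ≃g turanGraph n r := by
    refine ⟨finCongr (Fintype.card_fin n), ?_⟩
    intro a b
    show ((finCongr (Fintype.card_fin n) a : Fin n) : ℕ) % r ≠ _ ↔ ((a : ℕ) % r ≠ _)
    simp
  have h2 := (iso2.comp iso).card_edgeFinset_eq
  exact h1.trans (le_of_eq h2)

lemma reach_eq_of_isolated {W : Type*} {H : SimpleGraph W} {u : W}
    (h : ∀ z, ¬ H.Adj u z) {w : W} (hr : H.Reachable u w) : u = w := by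
  obtain ⟨p⟩ := hr
  cases p with
  | nil => rfl
  | cons ha _ => exact absurd ha (h _)

lemma alg_le_card {n : ℕ} (G : SimpleGraph (Fin n)) [DecidableRel G.Adj] (S : Finset (Fin n))
    (h1 : 0 < Sᶜ.card) (hdis : ¬ (G.induce (↑(Sᶜ) : Set (Fin n))).Connected) :
    algConn G ≤ (S.card : ℝ) := by
  classical
  have hne : Nonempty (↑(Sᶜ) : Set (Fin n)) := by
    obtain ⟨w, hw⟩ := Finset.card_pos.mp h1
    exact ⟨⟨w, by simpa using hw⟩⟩
  have hnp : ¬ (G.induce (↑(Sᶜ) : Set (Fin n))).Preconnected := by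
    intro h; exact hdis ⟨h⟩
  unfold SimpleGraph.Preconnected at hnp
  push_neg at hnp
  obtain ⟨a, b, hnr⟩ := hnp
  set A : Finset (Fin n) := Sᶜ.filter (fun v => ∃ hv : v ∈ (↑(Sᶜ) : Set (Fin n)),
      (G.induce (↑(Sᶜ) : Set (Fin n))).Reachable a ⟨v, hv⟩) with hA_def
  set B : Finset (Fin n) := Sᶜ \ A with hB_def
  have haA : (a : Fin n) ∈ A := Finset.mem_filter.mpr ⟨by simpa using a.2, a.2, Reachable.refl _⟩
  have hbB : (b : Fin n) ∈ B := by
    refine Finset.mem_sdiff.mpr ⟨by simpa using b.2, fun hbA => ?_⟩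
    obtain ⟨hv, hr⟩ := (Finset.mem_filter.mp hbA).2
    exact hnr hr
  have hAS : ∀ v ∈ A, v ∉ S := fun v hv => Finset.mem_compl.mp (Finset.mem_filter.mp hv).1
  have hBS : ∀ v ∈ B, v ∉ S := fun v hv => Finset.mem_compl.mp (Finset.mem_sdiff.mp hv).1
  have hBA : ∀ v ∈ B, v ∉ A := fun v hv => (Finset.mem_sdiff.mp hv).2
  have htri : ∀ v : Fin n, v ∈ A ∨ v ∈ B ∨ v ∈ S := by
    intro v
    by_cases hS : v ∈ S
    · exact Or.inr (Or.inr hS)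
    by_cases hA : v ∈ A
    · exact Or.inl hA
    · exact Or.inr (Or.inl (Finset.mem_sdiff.mpr ⟨Finset.mem_compl.mpr hS, hA⟩))
  have hnoedge : ∀ i ∈ A, ∀ j ∈ B, ¬ G.Adj i j := by
    intro i hi j hj hadj
    obtain ⟨hi', hri⟩ := (Finset.mem_filter.mp hi).2
    have hj' : j ∈ (↑(Sᶜ) : Set (Fin n)) := by simpa using (Finset.mem_sdiff.mp hj).1
    have hadj' : (G.induce (↑(Sᶜ) : Set (Fin n))).Adj ⟨i, hi'⟩ ⟨j, hj'⟩ := hadj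
    exact hBA j hj (Finset.mem_filter.mpr ⟨(Finset.mem_sdiff.mp hj).1, hj',
      hri.trans hadj'.reachable⟩)
  set ca := (A.card : ℝ) with hca_def
  set cb := (B.card : ℝ) with hcb_def
  have hca : 0 < ca := by
    have h := Finset.card_pos.mpr ⟨_, haA⟩
    rw [hca_def]
    exact_mod_cast h
  have hcb : 0 < cb := by
    have h := Finset.card_pos.mpr ⟨_, hbB⟩
    rw [hcb_def]
    exact_mod_cast h
  set x : Fin n → ℝ := fun v => if v ∈ A then cb else if v ∈ B then -ca else 0 with hx_def
  have xA : ∀ v ∈ A, x v = cb := fun v hv => by simp [hx_def, hv]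
  have xB : ∀ v ∈ B, x v = -ca := fun v hv => by simp [hx_def, hBA v hv, hv]
  have xS : ∀ v ∈ S, x v = 0 := by
    intro v hv
    have h1' : v ∉ A := fun h => hAS v h hv
    have h2' : v ∉ B := fun h => hBS v h hv
    simp [hx_def, h1', h2']
  have hpt : ∀ v : Fin n, x v = (if v ∈ A then cb else 0) + (if v ∈ B then -ca else 0) := by
    intro v
    by_cases h1' : v ∈ A
    · have h2' : v ∉ B := fun h => hBA v h h1'
      simp [hx_def, h1', h2']
    · by_cases h2' : v ∈ B <;> simp [hx_def, h1', h2']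
  have hsumx : ∑ v, x v = 0 := by
    rw [Finset.sum_congr rfl fun v _ => hpt v, Finset.sum_add_distrib,
      Finset.sum_ite_mem, Finset.sum_ite_mem, Finset.univ_inter, Finset.univ_inter,
      Finset.sum_const, Finset.sum_const, nsmul_eq_mul, nsmul_eq_mul]
    ring
  have hx0 : x ≠ 0 := by
    intro h
    have h' := congrFun h (a : Fin n)
    rw [xA _ haA] at h'
    exact hcb.ne' (by simpa using h')
  have hdot2 : x ⬝ᵥ x = ∑ v : Fin n, (x v) ^ 2 := by
    rw [dotProduct]
    exact Finset.sum_congr rfl fun v _ => (sq (x v)).symm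
  have hptsq : ∀ v : Fin n, (x v) ^ 2 = (if v ∈ A then cb ^ 2 else 0)
      + (if v ∈ B then ca ^ 2 else 0) := by
    intro v
    by_cases h1' : v ∈ A
    · have h2' : v ∉ B := fun h => hBA v h h1'
      simp [hx_def, h1', h2']
    · by_cases h2' : v ∈ B
      · simp [hx_def, h1', h2']
      · simp [hx_def, h1', h2']
  have hdot : x ⬝ᵥ x = ca * cb ^ 2 + cb * ca ^ 2 := by
    rw [hdot2, Finset.sum_congr rfl fun v _ => hptsq v, Finset.sum_add_distrib,
      Finset.sum_ite_mem, Finset.sum_ite_mem, Finset.univ_inter, Finset.univ_inter,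
      Finset.sum_const, Finset.sum_const, nsmul_eq_mul, nsmul_eq_mul]
  have hdpos : 0 < x ⬝ᵥ x := by
    rw [hdot]
    have := mul_pos hca (pow_pos hcb 2)
    have := mul_pos hcb (pow_pos hca 2)
    linarith
  have hquad : x ⬝ᵥ (G.lapMatrix ℝ).mulVec x
      = (∑ i : Fin n, ∑ j : Fin n, if G.Adj i j then (x i - x j) ^ 2 else 0) / 2 := by
    rw [← Matrix.toLinearMap₂'_apply', SimpleGraph.lapMatrix_toLinearMap₂']
  have keyb : ∀ i j : Fin n, (if G.Adj i j then (x i - x j) ^ 2 else 0)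
      ≤ (if j ∈ S then (x i) ^ 2 else 0) + (if i ∈ S then (x j) ^ 2 else 0) := by
    intro i j
    by_cases hadj : G.Adj i j
    · rw [if_pos hadj]
      rcases htri i with hiA | hiB | hiS <;> rcases htri j with hjA | hjB | hjS
      · rw [xA i hiA, xA j hjA]
        split_ifs <;> nlinarith [sq_nonneg ca, sq_nonneg cb]
      · exact absurd hadj (hnoedge i hiA j hjB)
      · rw [xA i hiA, xS j hjS, if_pos hjS, if_neg (fun h => hAS i hiA h)]
        nlinarith [sq_nonneg ca, sq_nonneg cb]
      · exact absurd hadj.symm (hnoedge j hjA i hiB)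
      · rw [xB i hiB, xB j hjB]
        split_ifs <;> nlinarith [sq_nonneg ca, sq_nonneg cb]
      · rw [xB i hiB, xS j hjS, if_pos hjS, if_neg (fun h => hBS i hiB h)]
        nlinarith [sq_nonneg ca, sq_nonneg cb]
      · rw [xS i hiS, xA j hjA, if_pos hiS, if_neg (fun h => hAS j hjA h)]
        nlinarith [sq_nonneg ca, sq_nonneg cb]
      · rw [xS i hiS, xB j hjB, if_pos hiS, if_neg (fun h => hBS j hjB h)]
        nlinarith [sq_nonneg ca, sq_nonneg cb]
      · rw [xS i hiS, xS j hjS]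
        split_ifs <;> nlinarith [sq_nonneg ca, sq_nonneg cb]
    · rw [if_neg hadj]
      split_ifs <;> nlinarith [sq_nonneg (x i), sq_nonneg (x j)]
  have hnum : ∑ i : Fin n, ∑ j : Fin n, (if G.Adj i j then (x i - x j) ^ 2 else 0)
      ≤ 2 * (S.card : ℝ) * (x ⬝ᵥ x) := by
    have step1 : ∑ i : Fin n, ∑ j : Fin n, (if G.Adj i j then (x i - x j) ^ 2 else 0)
        ≤ ∑ i : Fin n, ∑ j : Fin n,
          ((if j ∈ S then (x i) ^ 2 else 0) + (if i ∈ S then (x j) ^ 2 else 0)) :=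
      Finset.sum_le_sum fun i _ => Finset.sum_le_sum fun j _ => keyb i j
    have e1 : ∀ i : Fin n, ∑ j : Fin n, (if j ∈ S then (x i) ^ 2 else 0)
        = (S.card : ℝ) * (x i) ^ 2 := by
      intro i
      rw [Finset.sum_ite_mem, Finset.univ_inter, Finset.sum_const, nsmul_eq_mul]
    have e2 : ∀ i : Fin n, ∑ j : Fin n, (if i ∈ S then (x j) ^ 2 else 0)
        = (if i ∈ S then (∑ j : Fin n, (x j) ^ 2) else 0) := by
      intro i
      split_ifs <;> simp
    have step2 : ∑ i : Fin n, ∑ j : Fin n,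
        ((if j ∈ S then (x i) ^ 2 else 0) + (if i ∈ S then (x j) ^ 2 else 0))
        = 2 * (S.card : ℝ) * (x ⬝ᵥ x) := by
      simp_rw [Finset.sum_add_distrib]
      rw [Finset.sum_congr rfl fun i _ => e1 i, Finset.sum_congr rfl fun i _ => e2 i,
        Finset.sum_ite_mem, Finset.univ_inter, Finset.sum_const, nsmul_eq_mul,
        ← Finset.mul_sum, hdot2]
      ring
    linarith [step1, le_of_eq step2]
  have hRQ : (x ⬝ᵥ (G.lapMatrix ℝ).mulVec x) / (x ⬝ᵥ x) ≤ (S.card : ℝ) := by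
    rw [div_le_iff₀ hdpos, hquad]
    linarith [hnum]
  have lapeq : (@SimpleGraph.lapMatrix (Fin n) ℝ _ G (Classical.decRel G.Adj)
      (Classical.decEq (Fin n)) _) = G.lapMatrix ℝ := by
    congr!
  unfold algConn
  refine le_trans (csInf_le ?_ ?_) hRQ
  · refine ⟨0, ?_⟩
    rintro c ⟨y, hy0, -, rfl⟩
    rw [lapeq]
    apply div_nonneg
    · have h := (SimpleGraph.posSemidef_lapMatrix ℝ G).dotProduct_mulVec_nonneg y
      simpa using h
    · exact Finset.sum_nonneg fun i _ => mul_self_nonneg _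
  · exact ⟨x, hx0, hsumx, by rw [lapeq]⟩

theorem stmt18 {n r k t : ℕ} (hk : 1 ≤ k) (hn : n = k * r + t) (ht0 : 0 < t)
    (ht : t < r) (G : SimpleGraph (Fin n)) [DecidableRel G.Adj]
    (hfree : G.CliqueFree (r + 1))
    (hα : algConn G = (n : ℝ) - ((k : ℝ) + 1)) :
    G.minDegree = n - (k + 1) ∧
      t * (k + 1) ≤ (Finset.univ.filter (fun v => G.degree v = G.minDegree)).card ∧
      (vertConn G : ℝ) = algConn G ∧ (G.minDegree : ℝ) = algConn G := by
  have hr0 : 0 < r := lt_of_le_of_lt (Nat.zero_le _) ht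
  have hkn : k + 2 ≤ n := by
    have h2k : k * 2 ≤ k * r := Nat.mul_le_mul_left k (by omega)
    obtain ⟨m, hm⟩ : ∃ m, k * r = m := ⟨_, rfl⟩
    rw [hm] at h2k hn
    omega
  have hsum : (∑ v, G.degree v) + (n * k + t * (k + 1)) ≤ n * n := by
    have e1 := edge_bound hr0 G hfree
    have e2 := turan_count hn ht
    have e3 := G.sum_degrees_eq_twice_card_edges
    obtain ⟨P, hP⟩ : ∃ P, n * k + t * (k + 1) = P := ⟨_, rfl⟩
    obtain ⟨Q, hQ⟩ : ∃ Q, n * n = Q := ⟨_, rfl⟩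
    rw [hP, hQ] at e2 ⊢
    omega
  have hne : Nonempty (Fin n) := ⟨⟨0, by omega⟩⟩
  have hsum_ge : n * G.minDegree ≤ ∑ v, G.degree v := by
    have h := Finset.sum_le_sum (fun v (_ : v ∈ Finset.univ) => G.minDegree_le_degree v)
    calc n * G.minDegree = ∑ _v : Fin n, G.minDegree := by
          rw [Finset.sum_const, Finset.card_univ, Fintype.card_fin, smul_eq_mul]
      _ ≤ _ := h
  have hδ : G.minDegree + (k + 1) ≤ n := by
    by_contra hcon
    push_neg at hcon
    have h1 : n ≤ G.minDegree + k := by omega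
    have h2 : n * n ≤ n * G.minDegree + n * k := by
      calc n * n ≤ n * (G.minDegree + k) := Nat.mul_le_mul_left n h1
        _ = n * G.minDegree + n * k := by ring
    have h5 : 0 < t * (k + 1) := Nat.mul_pos ht0 (Nat.succ_pos k)
    obtain ⟨X, hX⟩ : ∃ X, n * G.minDegree = X := ⟨_, rfl⟩
    obtain ⟨Y, hY⟩ : ∃ Y, n * k = Y := ⟨_, rfl⟩
    obtain ⟨Z, hZ⟩ : ∃ Z, n * n = Z := ⟨_, rfl⟩
    obtain ⟨W, hW⟩ : ∃ W, t * (k + 1) = W := ⟨_, rfl⟩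
    obtain ⟨Sd, hSd⟩ : ∃ Sd, (∑ v, G.degree v) = Sd := ⟨_, rfl⟩
    rw [hX, hY, hZ] at h2
    rw [hY, hZ, hW, hSd] at hsum
    rw [hX, hSd] at hsum_ge
    rw [hW] at h5
    omega
  obtain ⟨v0, hv0⟩ := G.exists_minimal_degree_vertex
  have hS0card : (G.neighborFinset v0).card = G.minDegree := by
    rw [G.card_neighborFinset_eq_degree, hv0]
  have hS0c : ¬ (G.induce (↑((G.neighborFinset v0)ᶜ) : Set (Fin n))).Connected := by
    intro hconn
    have hv0mem : v0 ∈ (G.neighborFinset v0)ᶜ := by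
      simp [SimpleGraph.mem_neighborFinset]
    have hcard : 2 ≤ ((G.neighborFinset v0)ᶜ).card := by
      rw [Finset.card_compl, hS0card, Fintype.card_fin]
      omega
    obtain ⟨w, hw, hwv⟩ := Finset.exists_mem_ne (s := (G.neighborFinset v0)ᶜ) (by omega) v0
    have hv0' : v0 ∈ (↑((G.neighborFinset v0)ᶜ) : Set (Fin n)) := by simpa using hv0mem
    have hw' : w ∈ (↑((G.neighborFinset v0)ᶜ) : Set (Fin n)) := by simpa using hw
    have hiso : ∀ z, ¬ (G.induce (↑((G.neighborFinset v0)ᶜ) : Set (Fin n))).Adj ⟨v0, hv0'⟩ z := by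
      rintro ⟨z, hz⟩ hadj
      have hGadj : G.Adj v0 z := hadj
      have hzN : z ∈ G.neighborFinset v0 := (SimpleGraph.mem_neighborFinset _ _ _).mpr hGadj
      have hz' : z ∉ G.neighborFinset v0 := by simpa using hz
      exact hz' hzN
    have hvw := reach_eq_of_isolated hiso (hconn.preconnected ⟨v0, hv0'⟩ ⟨w, hw'⟩)
    exact hwv (by simpa using congrArg Subtype.val hvw.symm)
  have hvert_le : vertConn G ≤ G.minDegree := by
    unfold vertConn
    exact Nat.sInf_le ⟨G.neighborFinset v0, hS0card, hS0c⟩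
  have hset_ne : {m : ℕ | ∃ S : Finset (Fin n), S.card = m ∧
      ¬ (G.induce (↑(Sᶜ) : Set (Fin n))).Connected}.Nonempty :=
    ⟨_, ⟨G.neighborFinset v0, rfl, hS0c⟩⟩
  have hvc_mem : ∃ S : Finset (Fin n), S.card = vertConn G ∧
      ¬ (G.induce (↑(Sᶜ) : Set (Fin n))).Connected := Nat.sInf_mem hset_ne
  obtain ⟨S, hScard, hSdis⟩ := hvc_mem
  have halg_le : algConn G ≤ (vertConn G : ℝ) := by
    rw [← hScard]
    refine le_trans (alg_le_card G S ?_ hSdis) le_rfl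
    rw [Finset.card_compl, Fintype.card_fin, hScard]
    omega
  have hδr : (G.minDegree : ℝ) ≤ (n : ℝ) - ((k : ℝ) + 1) := by
    have h : (G.minDegree : ℝ) + ((k : ℝ) + 1) ≤ (n : ℝ) := by exact_mod_cast hδ
    linarith
  have hvr : (vertConn G : ℝ) ≤ (G.minDegree : ℝ) := by exact_mod_cast hvert_le
  have heq1 : (G.minDegree : ℝ) = (n : ℝ) - ((k : ℝ) + 1) := by
    rw [hα] at halg_le
    linarith
  have heq2 : (vertConn G : ℝ) = (n : ℝ) - ((k : ℝ) + 1) := by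
    rw [hα] at halg_le
    linarith
  have hdeq : G.minDegree + (k + 1) = n := by
    have h : (G.minDegree : ℝ) + ((k : ℝ) + 1) = (n : ℝ) := by linarith
    exact_mod_cast h
  have hcount : t * (k + 1) ≤ (Finset.univ.filter (fun v => G.degree v = G.minDegree)).card := by
    have hsplit : (Finset.univ.filter (fun v => G.degree v = G.minDegree)).card
        + (Finset.univ.filter (fun v => ¬ (G.degree v = G.minDegree))).card = n := by
      rw [Finset.card_filter_add_card_filter_not, Finset.card_univ, Fintype.card_fin]
    have hsum_lb : n * G.minDegree
        + (Finset.univ.filter (fun v => ¬ (G.degree v = G.minDegree))).card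
        ≤ ∑ v, G.degree v := by
      have e0 : ∀ v : Fin n,
          G.minDegree + (if G.degree v = G.minDegree then 0 else 1) ≤ G.degree v := by
        intro v
        have h := G.minDegree_le_degree v
        by_cases hv : G.degree v = G.minDegree
        · simp [hv]
        · simp only [if_neg hv]
          omega
      calc n * G.minDegree
            + (Finset.univ.filter (fun v => ¬ (G.degree v = G.minDegree))).card
          = ∑ v : Fin n, (G.minDegree + if G.degree v = G.minDegree then 0 else 1) := by
            rw [Finset.sum_add_distrib, Finset.sum_const, Finset.card_univ, Fintype.card_fin,
              smul_eq_mul]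
            congr 1
            rw [Finset.card_filter]
            exact Finset.sum_congr rfl fun v _ => by
              by_cases hv : G.degree v = G.minDegree <;> simp [hv]
        _ ≤ ∑ v, G.degree v := Finset.sum_le_sum fun v _ => e0 v
    have e1 : n * (G.minDegree + (k + 1)) = n * n := by rw [hdeq]
    have e2 : n * (G.minDegree + (k + 1)) = n * G.minDegree + n * k + n := by ring
    obtain ⟨X, hX⟩ : ∃ X, n * G.minDegree = X := ⟨_, rfl⟩
    obtain ⟨Y, hY⟩ : ∃ Y, n * k = Y := ⟨_, rfl⟩
    obtain ⟨Z, hZ⟩ : ∃ Z, n * n = Z := ⟨_, rfl⟩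
    obtain ⟨W, hW⟩ : ∃ W, t * (k + 1) = W := ⟨_, rfl⟩
    obtain ⟨Sd, hSd⟩ : ∃ Sd, (∑ v, G.degree v) = Sd := ⟨_, rfl⟩
    obtain ⟨E, hE⟩ : ∃ E, n * (G.minDegree + (k + 1)) = E := ⟨_, rfl⟩
    rw [hE, hZ] at e1
    rw [hE, hX, hY] at e2
    rw [hY, hZ, hW, hSd] at hsum
    rw [hX, hSd] at hsum_lb
    rw [hW]
    omega
  refine ⟨by omega, hcount, by rw [heq2, hα], by rw [heq1, hα]⟩
end
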